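/- arXiv:2506.13364 — 2 statements merged into one kernel-verified Lean document; each statement's English description precedes it below -/
import Mathlib

section
/- (Geometry-of-numbers bound) For every positive integer d there exists a constant C = C(d) such that the following holds. Let λ > 0 and X ≥ 1 be real, and let c₁, c₂, c₃ and X₁,…,X_d, Y₁,…,Y_d, Z₁,…,Z_d be positive integers that are admissible for (λ, X). Then B_d(c, X, Y, Z) ≤ C · (X^λ / P₁ + X^{λ-1}). -/
/-- `dyadic x X` means `x ∈ [X, 2X)`. -/
def dyadic (x X : ℕ) : Prop := X ≤ x ∧ x < 2 * X

/-- `B d c₁ c₂ c₃ Xs Ys Zs` counts tuples `(x, y, z) ∈ ℕ^{3d}` with `x i ∼ Xs i`,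
`y i ∼ Ys i`, `z i ∼ Zs i`, satisfying `c₁ ∏ xᵢ^i + c₂ ∏ yᵢ^i = c₃ ∏ zᵢ^i` and
`gcd(c₁ ∏ xᵢ, c₂ ∏ yᵢ, c₃ ∏ zᵢ) = 1` (indices run through `1, …, d`). -/
noncomputable def B (d : ℕ) (c₁ c₂ c₃ : ℕ) (Xs Ys Zs : Fin d → ℕ) : ℕ :=
  Nat.card {t : (Fin d → ℕ) × (Fin d → ℕ) × (Fin d → ℕ) //
    (∀ i, dyadic (t.1 i) (Xs i)) ∧ (∀ i, dyadic (t.2.1 i) (Ys i)) ∧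
    (∀ i, dyadic (t.2.2 i) (Zs i)) ∧
    c₁ * ∏ i, t.1 i ^ (i.val + 1) + c₂ * ∏ i, t.2.1 i ^ (i.val + 1)
      = c₃ * ∏ i, t.2.2 i ^ (i.val + 1) ∧
    Nat.gcd (c₁ * ∏ i, t.1 i) (Nat.gcd (c₂ * ∏ i, t.2.1 i) (c₃ * ∏ i, t.2.2 i)) = 1}

/-- The parameters are admissible for `(lam, X)`: all are positive,
`∏ᵢ XᵢYᵢZᵢ ∈ [X^lam, 2X^lam)` and `max(∏ Xᵢ^i, ∏ Yᵢ^i, ∏ Zᵢ^i) ∈ [X, 2X)`. -/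
def Admissible (d : ℕ) (lam X : ℝ) (c₁ c₂ c₃ : ℕ) (Xs Ys Zs : Fin d → ℕ) : Prop :=
  0 < c₁ ∧ 0 < c₂ ∧ 0 < c₃ ∧
  (∀ i, 0 < Xs i) ∧ (∀ i, 0 < Ys i) ∧ (∀ i, 0 < Zs i) ∧
  X ^ lam ≤ ((∏ i, Xs i * Ys i * Zs i : ℕ) : ℝ) ∧
  ((∏ i, Xs i * Ys i * Zs i : ℕ) : ℝ) < 2 * X ^ lam ∧
  X ≤ ((max (∏ i, Xs i ^ (i.val + 1))
        (max (∏ i, Ys i ^ (i.val + 1)) (∏ i, Zs i ^ (i.val + 1))) : ℕ) : ℝ) ∧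
  ((max (∏ i, Xs i ^ (i.val + 1))
        (max (∏ i, Ys i ^ (i.val + 1)) (∏ i, Zs i ^ (i.val + 1))) : ℕ) : ℝ) < 2 * X


lemma spread_lemma (T : Finset ℤ) (g A B : ℤ) (hg : 0 < g) (hT : T.Nonempty)
    (hbd : ∀ x ∈ T, A ≤ x ∧ x ≤ B)
    (hgap : ∀ x ∈ T, ∀ y ∈ T, x ≠ y → g ≤ |x - y|) :
    ((T.card : ℤ) - 1) * g ≤ B - A := by
  obtain ⟨x₀, hx₀⟩ := hT
  have hAB : A ≤ B := le_trans (hbd x₀ hx₀).1 (hbd x₀ hx₀).2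
  have key : ∀ x ∈ T, ∀ y ∈ T, x < y → (x - A) / g + 1 ≤ (y - A) / g := by
    intro x hx y hy hxy
    have hgle : g ≤ y - x := by
      have := hgap x hx y hy (ne_of_lt hxy)
      rwa [abs_sub_comm, abs_of_pos (by linarith)] at this
    calc (x - A) / g + 1 = (x - A + 1 * g) / g := by
          rw [Int.add_mul_ediv_right _ _ hg.ne']
      _ ≤ (y - A) / g := Int.ediv_le_ediv hg (by linarith)
  have hinj : Set.InjOn (fun x => (x - A) / g) ↑T := by
    intro x hx y hy hxy
    simp only at hxy
    by_contra hne
    rcases lt_or_gt_of_ne hne with h | h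
    · have := key x hx y hy h; omega
    · have := key y hy x hx h; omega
  have hmap : ∀ x ∈ T, (x - A) / g ∈ Finset.Icc (0 : ℤ) ((B - A) / g) := by
    intro x hx
    rw [Finset.mem_Icc]
    exact ⟨Int.ediv_nonneg (by linarith [(hbd x hx).1]) hg.le,
      Int.ediv_le_ediv hg (by linarith [(hbd x hx).2])⟩
  have hcard := Finset.card_le_card_of_injOn _ hmap hinj
  rw [Int.card_Icc] at hcard
  have h0 : (0 : ℤ) ≤ (B - A) / g := Int.ediv_nonneg (by linarith) hg.le
  have hcard' : (T.card : ℤ) ≤ (B - A) / g + 1 := by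
    rw [← Int.le_toNat (by linarith)] at *
    simpa using hcard
  have hdm : (B - A) / g * g ≤ B - A := by
    have := Int.mul_ediv_add_emod (B - A) g
    have := Int.emod_nonneg (B - A) hg.ne'
    nlinarith [Int.mul_ediv_add_emod (B - A) g]
  nlinarith [hdm, hcard']

lemma min_aux (a b p q : ℤ) (ha : 0 ≤ a) (hb : 0 ≤ b) (hp : 0 ≤ p) (hq : 0 ≤ q)
    (hpar : a * q = b * p) (hmax : max p q ≤ max a b) : p ≤ a := by
  by_contra hpa
  push_neg at hpa
  rcases hq.lt_or_eq with hq0 | hq0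
  · have hbq : b < q := by nlinarith
    have : max a b < max p q :=
      max_lt (lt_of_lt_of_le hpa (le_max_left p q)) (lt_of_lt_of_le hbq (le_max_right p q))
    exact absurd hmax (not_le.2 this)
  · have hb0 : b = 0 := by nlinarith
    rw [← hq0] at hmax
    rw [hb0] at hmax
    rw [max_eq_left hp, max_eq_left ha] at hmax
    linarith

set_option maxHeartbeats 1000000 in
lemma det_count (γ S₀ T₀ : ℤ) (hγ : 0 < γ) (hS : 0 < S₀) (hT : 0 < T₀) (F : Finset (ℤ × ℤ))
    (hbox : ∀ P ∈ F, S₀ ≤ P.1 ∧ P.1 < 2*S₀ ∧ T₀ ≤ P.2 ∧ P.2 < 2*T₀)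
    (hcop : ∀ P ∈ F, IsCoprime P.1 P.2)
    (hdet : ∀ P ∈ F, ∀ Q ∈ F, γ ∣ P.1*Q.2 - Q.1*P.2) :
    (F.card : ℤ) * γ ≤ 24 * (S₀ * T₀) + γ := by
  by_cases hc : F.card ≤ 1
  · have : (F.card : ℤ) ≤ 1 := by exact_mod_cast hc
    nlinarith
  push_neg at hc
  obtain ⟨P₀, hP₀, P₁, hP₁, hPne⟩ := Finset.one_lt_card.1 hc
  have hFne : F.Nonempty := ⟨P₀, hP₀⟩
  classical
  set ds : Finset (ℤ × ℤ) :=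
    ((F ×ˢ F).image (fun PQ => (PQ.1.1 - PQ.2.1, PQ.1.2 - PQ.2.2))).erase (0, 0) with hds
  have hds_mem : ∀ P ∈ F, ∀ Q ∈ F, P ≠ Q → (P.1 - Q.1, P.2 - Q.2) ∈ ds := by
    intro P hP Q hQ hne
    rw [hds, Finset.mem_erase]
    constructor
    · intro h
      rw [Prod.ext_iff] at h
      apply hne
      apply Prod.ext
      · have := h.1; simp only at this; linarith
      · have := h.2; simp only at this; linarith
    · exact Finset.mem_image.2 ⟨(P, Q), Finset.mem_product.2 ⟨hP, hQ⟩, rfl⟩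
  have hne : ds.Nonempty := ⟨_, hds_mem P₀ hP₀ P₁ hP₁ hPne⟩
  obtain ⟨dv, hdv, hdmin⟩ := Finset.exists_min_image ds (fun δ => max |δ.1| |δ.2|) hne
  set u := dv.1 with hu_def
  set v := dv.2 with hv_def
  have hd0 : dv ≠ (0, 0) := Finset.ne_of_mem_erase hdv
  have hdv' := Finset.mem_of_mem_erase hdv
  obtain ⟨RS, hRS, hRSe⟩ := Finset.mem_image.1 hdv'
  obtain ⟨hR, hS'⟩ := Finset.mem_product.1 hRS
  have hu : RS.1.1 - RS.2.1 = u := by rw [hu_def, ← hRSe]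
  have hv : RS.1.2 - RS.2.2 = v := by rw [hv_def, ← hRSe]
  have hboxR := hbox _ hR
  have hboxS := hbox _ hS'
  have hu_le : |u| ≤ S₀ - 1 := by
    rw [← hu, abs_le]; omega
  have hv_le : |v| ≤ T₀ - 1 := by
    rw [← hv, abs_le]; omega
  -- minimality consequences
  have hstep : ∀ P ∈ F, ∀ Q ∈ F, P ≠ Q → (P.1 - Q.1) * v = (P.2 - Q.2) * u →
      |u| ≤ |P.1 - Q.1| ∧ |v| ≤ |P.2 - Q.2| := by
    intro P hP Q hQ hne hpar
    have hmem := hds_mem P hP Q hQ hne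
    have hmax := hdmin _ hmem
    simp only at hmax
    have habs1 : |P.1 - Q.1| * |v| = |P.2 - Q.2| * |u| := by
      rw [← abs_mul, ← abs_mul, hpar]
    have habs2 : |P.2 - Q.2| * |u| = |P.1 - Q.1| * |v| := habs1.symm
    have hmax2 : max |v| |u| ≤ max |P.2 - Q.2| |P.1 - Q.1| := by
      rw [max_comm |v| _, max_comm |P.2 - Q.2| _]; exact hmax
    constructor
    · exact min_aux _ _ _ _ (abs_nonneg _) (abs_nonneg _) (abs_nonneg _) (abs_nonneg _)
        habs1 hmax
    · exact min_aux _ _ _ _ (abs_nonneg _) (abs_nonneg _) (abs_nonneg _) (abs_nonneg _)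
        habs2 hmax2
  -- divisibility of determinants against dv
  have hdvd2 : ∀ P ∈ F, ∀ Q ∈ F, γ ∣ (P.1 - Q.1) * v - (P.2 - Q.2) * u := by
    intro P hP Q hQ
    have h1 := hdet P hP RS.1 hR
    have h2 := hdet P hP RS.2 hS'
    have h3 := hdet Q hQ RS.1 hR
    have h4 := hdet Q hQ RS.2 hS'
    have hexp : (P.1 - Q.1) * v - (P.2 - Q.2) * u =
        ((P.1*RS.1.2 - RS.1.1*P.2) - (P.1*RS.2.2 - RS.2.1*P.2))
        - ((Q.1*RS.1.2 - RS.1.1*Q.2) - (Q.1*RS.2.2 - RS.2.1*Q.2)) := by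
      rw [← hu, ← hv]; ring
    rw [hexp]
    exact dvd_sub (dvd_sub h1 h2) (dvd_sub h3 h4)
  have hdvd1 : ∀ P ∈ F, γ ∣ P.1 * v - P.2 * u := by
    intro P hP
    have h1 := hdet P hP RS.1 hR
    have h2 := hdet P hP RS.2 hS'
    have hexp : P.1 * v - P.2 * u =
        (P.1*RS.1.2 - RS.1.1*P.2) - (P.1*RS.2.2 - RS.2.1*P.2) := by
      rw [← hu, ← hv]; ring
    rw [hexp]
    exact dvd_sub h1 h2
  -- γ lower bound
  have habs_bound : ∀ P ∈ F, |P.1 * v - P.2 * u| ≤ 2*(S₀*|v|) + 2*(T₀*|u|) := by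
    intro P hP
    obtain ⟨h1, h2, h3, h4⟩ := hbox P hP
    have : |P.1 * v - P.2 * u| ≤ |P.1 * v| + |P.2 * u| := abs_sub _ _
    rw [abs_mul, abs_mul] at this
    have hP1 : |P.1| ≤ 2*S₀ := by rw [abs_le]; omega
    have hP2 : |P.2| ≤ 2*T₀ := by rw [abs_le]; omega
    nlinarith [abs_nonneg v, abs_nonneg u, abs_nonneg P.1, abs_nonneg P.2]
  have hγE : γ ≤ 2*(S₀*|v|) + 2*(T₀*|u|) := by
    have hne0 : P₀.1 * v - P₀.2 * u ≠ 0 := by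
      intro heq0
      have hpq := hcop P₀ hP₀
      have hdvdu : P₀.1 ∣ u := by
        apply hpq.dvd_of_dvd_mul_left
        exact ⟨v, by linarith⟩
      obtain ⟨b1, b2, b3, b4⟩ := hbox P₀ hP₀
      have hu0 : u = 0 := by
        by_contra hu0
        have := Int.le_of_dvd (abs_pos.2 hu0) ((dvd_abs _ _).2 hdvdu)
        omega
      have hv0 : v = 0 := by
        have hz : P₀.1 * v = 0 := by rw [hu0] at heq0; linarith
        rcases mul_eq_zero.1 hz with h | h
        · omega
        · exact h
      exact hd0 (Prod.ext hu0 hv0)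
    have := Int.le_of_dvd (abs_pos.2 hne0) ((dvd_abs _ _).2 (hdvd1 P₀ hP₀))
    exact le_trans this (habs_bound P₀ hP₀)
  set f : ℤ × ℤ → ℤ := fun P => P.1 * v - P.2 * u with hf
  set L : ℕ := (F.image f).card with hL
  have himg : (L : ℤ) * γ ≤ 4*(S₀*|v|) + 4*(T₀*|u|) + γ := by
    have hsp := spread_lemma (F.image f) γ (-(2*(S₀*|v|) + 2*(T₀*|u|))) (2*(S₀*|v|) + 2*(T₀*|u|))
      hγ (hFne.image f) ?_ ?_
    · nlinarith [hsp]
    · intro x hx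
      obtain ⟨P, hP, hPx⟩ := Finset.mem_image.1 hx
      have := habs_bound P hP
      rw [hf] at hPx
      simp only at hPx
      rw [← hPx]
      rw [abs_le] at this
      exact ⟨by linarith [this.1], this.2⟩
    · intro x hx y hy hxy
      obtain ⟨P, hP, hPx⟩ := Finset.mem_image.1 hx
      obtain ⟨Q, hQ, hQy⟩ := Finset.mem_image.1 hy
      have hdd : γ ∣ x - y := by
        rw [← hPx, ← hQy, hf]
        have := hdvd2 P hP Q hQ
        have hexp : (P.1 * v - P.2 * u) - (Q.1 * v - Q.2 * u)
            = (P.1 - Q.1) * v - (P.2 - Q.2) * u := by ring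
        simp only
        rw [hexp]
        exact this
      exact Int.le_of_dvd (abs_pos.2 (sub_ne_zero.2 hxy)) ((dvd_abs _ _).2 hdd)
  -- fiber counting
  have hNsum : F.card = ∑ w ∈ F.image f, (F.filter (fun P => f P = w)).card :=
    Finset.card_eq_sum_card_fiberwise (fun x hx => Finset.mem_image_of_mem f hx)
  have hLpos : (0:ℤ) ≤ (L:ℤ) := by exact Int.natCast_nonneg _
  rcases le_or_gt (S₀ * |v|) (T₀ * |u|) with hUV | hUV
  · -- use first coordinates
    have hu0 : u ≠ 0 := by
      intro h
      have hveq : v = 0 := by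
        rw [h] at hUV
        simp only [abs_zero, mul_zero] at hUV
        have : |v| ≤ 0 := by nlinarith [abs_nonneg v]
        exact abs_eq_zero.1 (le_antisymm this (abs_nonneg v))
      exact hd0 (Prod.ext h hveq)
    have habs_u_pos : (0:ℤ) < |u| := abs_pos.2 hu0
    have hfib : ∀ w ∈ F.image f, ((F.filter (fun P => f P = w)).card : ℤ) * |u| ≤ S₀ + |u| := by
      intro w hw
      obtain ⟨P', hP', hP'w⟩ := Finset.mem_image.1 hw
      set Fw := F.filter (fun P => f P = w) with hFw
      have hFwne : Fw.Nonempty := ⟨P', Finset.mem_filter.2 ⟨hP', hP'w⟩⟩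
      have hFwF : ∀ P ∈ Fw, P ∈ F := fun P hP => (Finset.mem_filter.1 hP).1
      have hpar_of : ∀ P ∈ Fw, ∀ Q ∈ Fw, (P.1 - Q.1) * v = (P.2 - Q.2) * u := by
        intro P hP Q hQ
        have e1 : P.1 * v - P.2 * u = w := (Finset.mem_filter.1 hP).2
        have e2 : Q.1 * v - Q.2 * u = w := (Finset.mem_filter.1 hQ).2
        linear_combination e1 - e2
      have hinj : Set.InjOn (Prod.fst : ℤ × ℤ → ℤ) ↑Fw := by
        intro P hP Q hQ h1
        simp only [Finset.mem_coe] at hP hQ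
        by_contra hne2
        have := (hstep P (hFwF P hP) Q (hFwF Q hQ) hne2 (hpar_of P hP Q hQ)).1
        rw [h1, sub_self, abs_zero] at this
        omega
      have hcard : (Fw.image Prod.fst).card = Fw.card := Finset.card_image_of_injOn hinj
      have hsp := spread_lemma (Fw.image Prod.fst) |u| S₀ (2*S₀ - 1) habs_u_pos
        (hFwne.image _) ?_ ?_
      · rw [hcard] at hsp
        have : ((Fw.card : ℤ) - 1) * |u| ≤ S₀ - 1 := by linarith [hsp]
        nlinarith [habs_u_pos]
      · intro x hx
        obtain ⟨P, hP, hPx⟩ := Finset.mem_image.1 hx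
        obtain ⟨b1, b2, b3, b4⟩ := hbox P (hFwF P hP)
        rw [← hPx]
        omega
      · intro x hx y hy hxy
        obtain ⟨P, hP, hPx⟩ := Finset.mem_image.1 hx
        obtain ⟨Q, hQ, hQy⟩ := Finset.mem_image.1 hy
        have hPQ : P ≠ Q := fun h => hxy (by rw [← hPx, ← hQy, h])
        have := (hstep P (hFwF P hP) Q (hFwF Q hQ) hPQ (hpar_of P hP Q hQ)).1
        rw [hPx, hQy] at this
        exact this
    have hNu : (F.card : ℤ) * |u| ≤ (L : ℤ) * (S₀ + |u|) := by
      have hcast : (F.card : ℤ) = ∑ w ∈ F.image f, ((F.filter (fun P => f P = w)).card : ℤ) := by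
        rw [hNsum]; push_cast; ring
      rw [hcast, Finset.sum_mul]
      calc ∑ w ∈ F.image f, ((F.filter (fun P => f P = w)).card : ℤ) * |u|
          ≤ ∑ _w ∈ F.image f, (S₀ + |u|) := Finset.sum_le_sum hfib
        _ = (L : ℤ) * (S₀ + |u|) := by rw [Finset.sum_const, hL, nsmul_eq_mul]
    have hγ4 : γ ≤ 4*(T₀*|u|) := by linarith [hγE, hUV]
    have h1 : (F.card:ℤ) * |u| * γ ≤ (L:ℤ) * (S₀+|u|) * γ :=
      mul_le_mul_of_nonneg_right hNu hγ.le
    have h3 : ((L:ℤ)*γ) * (S₀+|u|) ≤ (4*(S₀*|v|) + 4*(T₀*|u|) + γ) * (S₀+|u|) :=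
      mul_le_mul_of_nonneg_right himg (by linarith)
    have h5 : 4*(S₀*|v|) + 4*(T₀*|u|) + γ ≤ 12*(T₀*|u|) := by linarith
    have h6 : S₀ + |u| ≤ 2*S₀ := by linarith
    have h7 : (4*(S₀*|v|)+4*(T₀*|u|)+γ) * (S₀+|u|) ≤ 12*(T₀*|u|) * (2*S₀) :=
      mul_le_mul h5 h6 (by linarith [abs_nonneg u]) (by positivity)
    have hA : (F.card:ℤ) * γ * |u| = (F.card:ℤ) * |u| * γ := by ring
    have hB : (L:ℤ) * (S₀+|u|) * γ = ((L:ℤ)*γ) * (S₀+|u|) := by ring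
    have hC : 12*(T₀*|u|) * (2*S₀) = 24*(S₀*T₀) * |u| := by ring
    have hfin : (F.card : ℤ) * γ * |u| ≤ 24*(S₀*T₀) * |u| := by
      linarith [h1, h3, h7, hA, hB, hC]
    have := le_of_mul_le_mul_right hfin habs_u_pos
    linarith
  · -- use second coordinates
    have hv0 : v ≠ 0 := by
      intro h
      rw [h] at hUV
      simp only [abs_zero, mul_zero] at hUV
      nlinarith [abs_nonneg u, hT.le, mul_nonneg hT.le (abs_nonneg u)]
    have habs_v_pos : (0:ℤ) < |v| := abs_pos.2 hv0
    have hfib : ∀ w ∈ F.image f, ((F.filter (fun P => f P = w)).card : ℤ) * |v| ≤ T₀ + |v| := by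
      intro w hw
      obtain ⟨P', hP', hP'w⟩ := Finset.mem_image.1 hw
      set Fw := F.filter (fun P => f P = w) with hFw
      have hFwne : Fw.Nonempty := ⟨P', Finset.mem_filter.2 ⟨hP', hP'w⟩⟩
      have hFwF : ∀ P ∈ Fw, P ∈ F := fun P hP => (Finset.mem_filter.1 hP).1
      have hpar_of : ∀ P ∈ Fw, ∀ Q ∈ Fw, (P.1 - Q.1) * v = (P.2 - Q.2) * u := by
        intro P hP Q hQ
        have e1 : P.1 * v - P.2 * u = w := (Finset.mem_filter.1 hP).2
        have e2 : Q.1 * v - Q.2 * u = w := (Finset.mem_filter.1 hQ).2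
        linear_combination e1 - e2
      have hinj : Set.InjOn (Prod.snd : ℤ × ℤ → ℤ) ↑Fw := by
        intro P hP Q hQ h1
        simp only [Finset.mem_coe] at hP hQ
        by_contra hne2
        have := (hstep P (hFwF P hP) Q (hFwF Q hQ) hne2 (hpar_of P hP Q hQ)).2
        rw [h1, sub_self, abs_zero] at this
        omega
      have hcard : (Fw.image Prod.snd).card = Fw.card := Finset.card_image_of_injOn hinj
      have hsp := spread_lemma (Fw.image Prod.snd) |v| T₀ (2*T₀ - 1) habs_v_pos
        (hFwne.image _) ?_ ?_
      · rw [hcard] at hsp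
        have : ((Fw.card : ℤ) - 1) * |v| ≤ T₀ - 1 := by linarith [hsp]
        nlinarith [habs_v_pos]
      · intro x hx
        obtain ⟨P, hP, hPx⟩ := Finset.mem_image.1 hx
        obtain ⟨b1, b2, b3, b4⟩ := hbox P (hFwF P hP)
        rw [← hPx]
        omega
      · intro x hx y hy hxy
        obtain ⟨P, hP, hPx⟩ := Finset.mem_image.1 hx
        obtain ⟨Q, hQ, hQy⟩ := Finset.mem_image.1 hy
        have hPQ : P ≠ Q := fun h => hxy (by rw [← hPx, ← hQy, h])
        have := (hstep P (hFwF P hP) Q (hFwF Q hQ) hPQ (hpar_of P hP Q hQ)).2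
        rw [hPx, hQy] at this
        exact this
    have hNv : (F.card : ℤ) * |v| ≤ (L : ℤ) * (T₀ + |v|) := by
      have hcast : (F.card : ℤ) = ∑ w ∈ F.image f, ((F.filter (fun P => f P = w)).card : ℤ) := by
        rw [hNsum]; push_cast; ring
      rw [hcast, Finset.sum_mul]
      calc ∑ w ∈ F.image f, ((F.filter (fun P => f P = w)).card : ℤ) * |v|
          ≤ ∑ _w ∈ F.image f, (T₀ + |v|) := Finset.sum_le_sum hfib
        _ = (L : ℤ) * (T₀ + |v|) := by rw [Finset.sum_const, hL, nsmul_eq_mul]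
    have hγ4 : γ ≤ 4*(S₀*|v|) := by linarith [hγE, hUV]
    have h1 : (F.card:ℤ) * |v| * γ ≤ (L:ℤ) * (T₀+|v|) * γ :=
      mul_le_mul_of_nonneg_right hNv hγ.le
    have h3 : ((L:ℤ)*γ) * (T₀+|v|) ≤ (4*(S₀*|v|) + 4*(T₀*|u|) + γ) * (T₀+|v|) :=
      mul_le_mul_of_nonneg_right himg (by linarith)
    have h5 : 4*(S₀*|v|) + 4*(T₀*|u|) + γ ≤ 12*(S₀*|v|) := by linarith
    have h6 : T₀ + |v| ≤ 2*T₀ := by linarith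
    have h7 : (4*(S₀*|v|)+4*(T₀*|u|)+γ) * (T₀+|v|) ≤ 12*(S₀*|v|) * (2*T₀) :=
      mul_le_mul h5 h6 (by linarith [abs_nonneg v]) (by positivity)
    have hA : (F.card:ℤ) * γ * |v| = (F.card:ℤ) * |v| * γ := by ring
    have hB : (L:ℤ) * (T₀+|v|) * γ = ((L:ℤ)*γ) * (T₀+|v|) := by ring
    have hC : 12*(S₀*|v|) * (2*T₀) = 24*(S₀*T₀) * |v| := by ring
    have hfin : (F.card : ℤ) * γ * |v| ≤ 24*(S₀*T₀) * |v| := by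
      linarith [h1, h3, h7, hA, hB, hC]
    have := le_of_mul_le_mul_right hfin habs_v_pos
    linarith

lemma linear_count (a b c X₁ Y₁ Z₁ : ℕ) (ha : 0 < a) (hb : 0 < b) (hc : 0 < c)
    (hX : 0 < X₁) (hY : 0 < Y₁) (hZ : 0 < Z₁) (G : Finset (ℕ × ℕ × ℕ))
    (hbox : ∀ t ∈ G, (X₁ ≤ t.1 ∧ t.1 < 2*X₁) ∧ (Y₁ ≤ t.2.1 ∧ t.2.1 < 2*Y₁) ∧
      (Z₁ ≤ t.2.2 ∧ t.2.2 < 2*Z₁))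
    (heq : ∀ t ∈ G, a * t.1 + b * t.2.1 = c * t.2.2)
    (hcop : ∀ t ∈ G, Nat.Coprime (a*t.1) (b*t.2.1) ∧ Nat.Coprime (a*t.1) (c*t.2.2) ∧
      Nat.Coprime (b*t.2.1) (c*t.2.2)) :
    G.card * max (a*X₁) (max (b*Y₁) (c*Z₁)) ≤
      24*(X₁*Y₁*Z₁) + max (a*X₁) (max (b*Y₁) (c*Z₁)) := by
  classical
  rcases G.eq_empty_or_nonempty with hG | ⟨t₀, ht₀⟩
  · simp [hG]
  have hab : Nat.Coprime a b :=
    Nat.Coprime.coprime_dvd_right (dvd_mul_right b t₀.2.1)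
      (Nat.Coprime.coprime_dvd_left (dvd_mul_right a t₀.1) (hcop t₀ ht₀).1)
  have hac : Nat.Coprime a c :=
    Nat.Coprime.coprime_dvd_right (dvd_mul_right c t₀.2.2)
      (Nat.Coprime.coprime_dvd_left (dvd_mul_right a t₀.1) (hcop t₀ ht₀).2.1)
  have hbc : Nat.Coprime b c :=
    Nat.Coprime.coprime_dvd_right (dvd_mul_right c t₀.2.2)
      (Nat.Coprime.coprime_dvd_left (dvd_mul_right b t₀.2.1) (hcop t₀ ht₀).2.2)
  have hchoice : max (a*X₁) (max (b*Y₁) (c*Z₁)) = a*X₁ ∨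
      max (a*X₁) (max (b*Y₁) (c*Z₁)) = b*Y₁ ∨ max (a*X₁) (max (b*Y₁) (c*Z₁)) = c*Z₁ := by
    rcases max_choice (a*X₁) (max (b*Y₁) (c*Z₁)) with h | h
    · exact Or.inl h
    · rcases max_choice (b*Y₁) (c*Z₁) with h' | h'
      · exact Or.inr (Or.inl (by rw [h, h']))
      · exact Or.inr (Or.inr (by rw [h, h']))
  rcases hchoice with hM | hM | hM
  · -- M = a*X₁ : project to (y, z), modulus a
    rw [hM]
    set F := G.image (fun t : ℕ×ℕ×ℕ => ((t.2.1 : ℤ), (t.2.2 : ℤ))) with hF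
    have hinj : Set.InjOn (fun t : ℕ×ℕ×ℕ => ((t.2.1 : ℤ), (t.2.2 : ℤ))) ↑G := by
      intro t ht t' ht' hval
      simp only [Prod.ext_iff, Nat.cast_inj] at hval
      have e1 := heq t ht
      have e2 := heq t' ht'
      rw [← hval.1, ← hval.2] at e2
      have : a * t.1 = a * t'.1 := by omega
      have hp : t.1 = t'.1 := Nat.eq_of_mul_eq_mul_left ha this
      exact Prod.ext hp (Prod.ext hval.1 hval.2)
    have hFcard : F.card = G.card := Finset.card_image_of_injOn hinj
    have hdc := det_count (a:ℤ) (Y₁:ℤ) (Z₁:ℤ) (by exact_mod_cast ha) (by exact_mod_cast hY)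
      (by exact_mod_cast hZ) F ?_ ?_ ?_
    · have key : G.card * a ≤ 24*(Y₁*Z₁) + a := by
        rw [hFcard] at hdc; exact_mod_cast hdc
      calc G.card * (a*X₁) = (G.card * a) * X₁ := by ring
        _ ≤ (24*(Y₁*Z₁) + a) * X₁ := Nat.mul_le_mul_right X₁ key
        _ = 24*(X₁*Y₁*Z₁) + a*X₁ := by ring
    · intro P hP
      obtain ⟨t, ht, rfl⟩ := Finset.mem_image.1 hP
      obtain ⟨_, h2, h3⟩ := hbox t ht
      dsimp only
      refine ⟨by exact_mod_cast h2.1, by push_cast; exact_mod_cast h2.2,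
        by exact_mod_cast h3.1, by push_cast; exact_mod_cast h3.2⟩
    · intro P hP
      obtain ⟨t, ht, rfl⟩ := Finset.mem_image.1 hP
      dsimp only
      rw [Int.isCoprime_iff_gcd_eq_one, Int.gcd_natCast_natCast]
      exact Nat.Coprime.coprime_dvd_right (dvd_mul_left t.2.2 c)
        (Nat.Coprime.coprime_dvd_left (dvd_mul_left t.2.1 b) (hcop t ht).2.2)
    · intro P hP Q hQ
      obtain ⟨t, ht, rfl⟩ := Finset.mem_image.1 hP
      obtain ⟨t', ht', rfl⟩ := Finset.mem_image.1 hQ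
      dsimp only
      have e1 : (a:ℤ) * t.1 + b * t.2.1 = c * t.2.2 := by exact_mod_cast heq t ht
      have e2 : (a:ℤ) * t'.1 + b * t'.2.1 = c * t'.2.2 := by exact_mod_cast heq t' ht'
      have hkey : (b:ℤ) * ((t.2.1:ℤ) * t'.2.2 - (t'.2.1:ℤ) * t.2.2)
          = (a:ℤ) * ((t'.1:ℤ) * t.2.2 - (t.1:ℤ) * t'.2.2) := by
        linear_combination (t'.2.2:ℤ) * e1 - (t.2.2:ℤ) * e2
      have hdvd : (a:ℤ) ∣ (b:ℤ) * ((t.2.1:ℤ) * t'.2.2 - (t'.2.1:ℤ) * t.2.2) :=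
        ⟨_, hkey⟩
      have hcoab : IsCoprime (a:ℤ) (b:ℤ) := by
        rw [Int.isCoprime_iff_gcd_eq_one, Int.gcd_natCast_natCast]; exact hab
      exact hcoab.dvd_of_dvd_mul_left hdvd
  · -- M = b*Y₁ : project to (x, z), modulus b
    rw [hM]
    set F := G.image (fun t : ℕ×ℕ×ℕ => ((t.1 : ℤ), (t.2.2 : ℤ))) with hF
    have hinj : Set.InjOn (fun t : ℕ×ℕ×ℕ => ((t.1 : ℤ), (t.2.2 : ℤ))) ↑G := by
      intro t ht t' ht' hval
      simp only [Prod.ext_iff, Nat.cast_inj] at hval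
      have e1 := heq t ht
      have e2 := heq t' ht'
      rw [← hval.1, ← hval.2] at e2
      have : b * t.2.1 = b * t'.2.1 := by omega
      have hq : t.2.1 = t'.2.1 := Nat.eq_of_mul_eq_mul_left hb this
      exact Prod.ext hval.1 (Prod.ext hq hval.2)
    have hFcard : F.card = G.card := Finset.card_image_of_injOn hinj
    have hdc := det_count (b:ℤ) (X₁:ℤ) (Z₁:ℤ) (by exact_mod_cast hb) (by exact_mod_cast hX)
      (by exact_mod_cast hZ) F ?_ ?_ ?_
    · have key : G.card * b ≤ 24*(X₁*Z₁) + b := by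
        rw [hFcard] at hdc; exact_mod_cast hdc
      calc G.card * (b*Y₁) = (G.card * b) * Y₁ := by ring
        _ ≤ (24*(X₁*Z₁) + b) * Y₁ := Nat.mul_le_mul_right Y₁ key
        _ = 24*(X₁*Y₁*Z₁) + b*Y₁ := by ring
    · intro P hP
      obtain ⟨t, ht, rfl⟩ := Finset.mem_image.1 hP
      obtain ⟨h1, _, h3⟩ := hbox t ht
      dsimp only
      refine ⟨by exact_mod_cast h1.1, by push_cast; exact_mod_cast h1.2,
        by exact_mod_cast h3.1, by push_cast; exact_mod_cast h3.2⟩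
    · intro P hP
      obtain ⟨t, ht, rfl⟩ := Finset.mem_image.1 hP
      dsimp only
      rw [Int.isCoprime_iff_gcd_eq_one, Int.gcd_natCast_natCast]
      exact Nat.Coprime.coprime_dvd_right (dvd_mul_left t.2.2 c)
        (Nat.Coprime.coprime_dvd_left (dvd_mul_left t.1 a) (hcop t ht).2.1)
    · intro P hP Q hQ
      obtain ⟨t, ht, rfl⟩ := Finset.mem_image.1 hP
      obtain ⟨t', ht', rfl⟩ := Finset.mem_image.1 hQ
      dsimp only
      have e1 : (a:ℤ) * t.1 + b * t.2.1 = c * t.2.2 := by exact_mod_cast heq t ht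
      have e2 : (a:ℤ) * t'.1 + b * t'.2.1 = c * t'.2.2 := by exact_mod_cast heq t' ht'
      have hkey : (a:ℤ) * ((t.1:ℤ) * t'.2.2 - (t'.1:ℤ) * t.2.2)
          = (b:ℤ) * ((t'.2.1:ℤ) * t.2.2 - (t.2.1:ℤ) * t'.2.2) := by
        linear_combination (t'.2.2:ℤ) * e1 - (t.2.2:ℤ) * e2
      have hdvd : (b:ℤ) ∣ (a:ℤ) * ((t.1:ℤ) * t'.2.2 - (t'.1:ℤ) * t.2.2) :=
        ⟨_, hkey⟩
      have hcoba : IsCoprime (b:ℤ) (a:ℤ) := by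
        rw [Int.isCoprime_iff_gcd_eq_one, Int.gcd_natCast_natCast]; exact hab.symm
      exact hcoba.dvd_of_dvd_mul_left hdvd
  · -- M = c*Z₁ : project to (x, y), modulus c
    rw [hM]
    set F := G.image (fun t : ℕ×ℕ×ℕ => ((t.1 : ℤ), (t.2.1 : ℤ))) with hF
    have hinj : Set.InjOn (fun t : ℕ×ℕ×ℕ => ((t.1 : ℤ), (t.2.1 : ℤ))) ↑G := by
      intro t ht t' ht' hval
      simp only [Prod.ext_iff, Nat.cast_inj] at hval
      have e1 := heq t ht
      have e2 := heq t' ht'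
      rw [← hval.1, ← hval.2] at e2
      have : c * t.2.2 = c * t'.2.2 := by omega
      have hr : t.2.2 = t'.2.2 := Nat.eq_of_mul_eq_mul_left hc this
      exact Prod.ext hval.1 (Prod.ext hval.2 hr)
    have hFcard : F.card = G.card := Finset.card_image_of_injOn hinj
    have hdc := det_count (c:ℤ) (X₁:ℤ) (Y₁:ℤ) (by exact_mod_cast hc) (by exact_mod_cast hX)
      (by exact_mod_cast hY) F ?_ ?_ ?_
    · have key : G.card * c ≤ 24*(X₁*Y₁) + c := by
        rw [hFcard] at hdc; exact_mod_cast hdc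
      calc G.card * (c*Z₁) = (G.card * c) * Z₁ := by ring
        _ ≤ (24*(X₁*Y₁) + c) * Z₁ := Nat.mul_le_mul_right Z₁ key
        _ = 24*(X₁*Y₁*Z₁) + c*Z₁ := by ring
    · intro P hP
      obtain ⟨t, ht, rfl⟩ := Finset.mem_image.1 hP
      obtain ⟨h1, h2, _⟩ := hbox t ht
      dsimp only
      refine ⟨by exact_mod_cast h1.1, by push_cast; exact_mod_cast h1.2,
        by exact_mod_cast h2.1, by push_cast; exact_mod_cast h2.2⟩
    · intro P hP
      obtain ⟨t, ht, rfl⟩ := Finset.mem_image.1 hP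
      dsimp only
      rw [Int.isCoprime_iff_gcd_eq_one, Int.gcd_natCast_natCast]
      exact Nat.Coprime.coprime_dvd_right (dvd_mul_left t.2.1 b)
        (Nat.Coprime.coprime_dvd_left (dvd_mul_left t.1 a) (hcop t ht).1)
    · intro P hP Q hQ
      obtain ⟨t, ht, rfl⟩ := Finset.mem_image.1 hP
      obtain ⟨t', ht', rfl⟩ := Finset.mem_image.1 hQ
      dsimp only
      have e1 : (a:ℤ) * t.1 + b * t.2.1 = c * t.2.2 := by exact_mod_cast heq t ht
      have e2 : (a:ℤ) * t'.1 + b * t'.2.1 = c * t'.2.2 := by exact_mod_cast heq t' ht'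
      have hkey : (a:ℤ) * ((t.1:ℤ) * t'.2.1 - (t'.1:ℤ) * t.2.1)
          = (c:ℤ) * ((t.2.2:ℤ) * t'.2.1 - (t'.2.2:ℤ) * t.2.1) := by
        linear_combination (t'.2.1:ℤ) * e1 - (t.2.1:ℤ) * e2
      have hdvd : (c:ℤ) ∣ (a:ℤ) * ((t.1:ℤ) * t'.2.1 - (t'.1:ℤ) * t.2.1) :=
        ⟨_, hkey⟩
      have hcoca : IsCoprime (c:ℤ) (a:ℤ) := by
        rw [Int.isCoprime_iff_gcd_eq_one, Int.gcd_natCast_natCast]; exact hac.symm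
      exact hcoca.dvd_of_dvd_mul_left hdvd

lemma prime_transfer {ρ cc : ℕ} (hρ : ρ.Prime) {d : ℕ} (f : Fin d → ℕ) (e : Fin d → ℕ)
    (h : ρ ∣ cc * ∏ i, f i ^ e i) : ρ ∣ cc * ∏ i, f i := by
  rcases (Nat.Prime.dvd_mul hρ).1 h with h' | h'
  · exact dvd_mul_of_dvd_left h' _
  · obtain ⟨i, _, hi⟩ := hρ.prime.exists_mem_finset_dvd h'
    exact dvd_mul_of_dvd_right
      ((hρ.dvd_of_dvd_pow hi).trans (Finset.dvd_prod_of_mem f (Finset.mem_univ i))) _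

lemma coprime_triple {A' B' C' A C D : ℕ} (hE : A' + B' = C')
    (hA : ∀ ρ, ρ.Prime → ρ ∣ A' → ρ ∣ A) (hB : ∀ ρ, ρ.Prime → ρ ∣ B' → ρ ∣ C)
    (hC : ∀ ρ, ρ.Prime → ρ ∣ C' → ρ ∣ D)
    (hg : Nat.gcd A (Nat.gcd C D) = 1) :
    Nat.Coprime A' B' ∧ Nat.Coprime A' C' ∧ Nat.Coprime B' C' := by
  have hdvd3 : ∀ ρ : ℕ, ρ.Prime → ρ ∣ A' → ρ ∣ B' → ρ ∣ C' → False := by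
    intro ρ hρ h1 h2 h3
    have hone := Nat.dvd_gcd (hA ρ hρ h1) (Nat.dvd_gcd (hB ρ hρ h2) (hC ρ hρ h3))
    rw [hg] at hone
    exact hρ.ne_one (Nat.dvd_one.1 hone)
  refine ⟨?_, ?_, ?_⟩
  · by_contra h
    have hρ := Nat.minFac_prime h
    have d1 : (Nat.gcd A' B').minFac ∣ A' := (Nat.minFac_dvd _).trans (Nat.gcd_dvd_left _ _)
    have d2 : (Nat.gcd A' B').minFac ∣ B' := (Nat.minFac_dvd _).trans (Nat.gcd_dvd_right _ _)
    exact hdvd3 _ hρ d1 d2 (hE ▸ dvd_add d1 d2)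
  · by_contra h
    have hρ := Nat.minFac_prime h
    have d1 : (Nat.gcd A' C').minFac ∣ A' := (Nat.minFac_dvd _).trans (Nat.gcd_dvd_left _ _)
    have d3 : (Nat.gcd A' C').minFac ∣ C' := (Nat.minFac_dvd _).trans (Nat.gcd_dvd_right _ _)
    have d2 : (Nat.gcd A' C').minFac ∣ B' := by
      have hBeq : B' = C' - A' := by omega
      rw [hBeq]; exact Nat.dvd_sub d3 d1
    exact hdvd3 _ hρ d1 d2 d3
  · by_contra h
    have hρ := Nat.minFac_prime h
    have d2 : (Nat.gcd B' C').minFac ∣ B' := (Nat.minFac_dvd _).trans (Nat.gcd_dvd_left _ _)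
    have d3 : (Nat.gcd B' C').minFac ∣ C' := (Nat.minFac_dvd _).trans (Nat.gcd_dvd_right _ _)
    have d1 : (Nat.gcd B' C').minFac ∣ A' := by
      have hAeq : A' = C' - B' := by omega
      rw [hAeq]; exact Nat.dvd_sub d3 d2
    exact hdvd3 _ hρ d1 d2 d3

lemma split_prod {d : ℕ} (i0 : Fin d) (hi0 : i0.val = 0) (f : Fin d → ℕ) :
    ∏ i, f i ^ (i.val + 1) = (∏ i ∈ Finset.univ.erase i0, f i ^ (i.val + 1)) * f i0 := by
  classical
  have h := Finset.mul_prod_erase Finset.univ (fun i => f i ^ (i.val + 1))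
    (Finset.mem_univ i0)
  rw [← h]
  simp only [hi0, pow_one]
  ring

set_option maxHeartbeats 2000000 in
theorem geometry_of_numbers_bound (d : ℕ) (hd : 0 < d) :
    ∃ C : ℝ, ∀ (lam X : ℝ) (c₁ c₂ c₃ : ℕ) (Xs Ys Zs : Fin d → ℕ),
      0 < lam → 1 ≤ X → Admissible d lam X c₁ c₂ c₃ Xs Ys Zs →
      (B d c₁ c₂ c₃ Xs Ys Zs : ℝ) ≤
        C * (X ^ lam / ((Xs ⟨0, hd⟩ * Ys ⟨0, hd⟩ * Zs ⟨0, hd⟩ : ℕ) : ℝ)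
          + X ^ (lam - 1)) := by
  classical
  refine ⟨96, ?_⟩
  intro lam X c₁ c₂ c₃ Xs Ys Zs hlam hX hadm
  obtain ⟨hc₁, hc₂, hc₃, hXs, hYs, hZs, hPl, hPu, hmax1, hmax2⟩ := hadm
  set i0 : Fin d := ⟨0, hd⟩ with hi0def
  have hi0 : i0.val = 0 := rfl
  have hXpos : (0:ℝ) < X := lt_of_lt_of_le one_pos hX
  set P₁ : ℕ := Xs i0 * Ys i0 * Zs i0 with hP₁def
  have hP₁pos : 0 < P₁ := Nat.mul_pos (Nat.mul_pos (hXs i0) (hYs i0)) (hZs i0)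
  -- the solution set as a Finset
  set pred : (Fin d → ℕ) × (Fin d → ℕ) × (Fin d → ℕ) → Prop := fun t =>
    (∀ i, dyadic (t.1 i) (Xs i)) ∧ (∀ i, dyadic (t.2.1 i) (Ys i)) ∧
    (∀ i, dyadic (t.2.2 i) (Zs i)) ∧
    c₁ * ∏ i, t.1 i ^ (i.val + 1) + c₂ * ∏ i, t.2.1 i ^ (i.val + 1)
      = c₃ * ∏ i, t.2.2 i ^ (i.val + 1) ∧
    Nat.gcd (c₁ * ∏ i, t.1 i) (Nat.gcd (c₂ * ∏ i, t.2.1 i) (c₃ * ∏ i, t.2.2 i)) = 1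
    with hpred
  set bigbox := (Fintype.piFinset fun i => Finset.Ico (Xs i) (2*Xs i)) ×ˢ
    ((Fintype.piFinset fun i => Finset.Ico (Ys i) (2*Ys i)) ×ˢ
     (Fintype.piFinset fun i => Finset.Ico (Zs i) (2*Zs i))) with hbigbox
  set Sfin := bigbox.filter pred with hSfin
  have hBeq : B d c₁ c₂ c₃ Xs Ys Zs = Sfin.card := by
    have hset : {t : (Fin d → ℕ) × (Fin d → ℕ) × (Fin d → ℕ) | pred t} = ↑Sfin := by
      ext t
      simp only [Set.mem_setOf_eq, hSfin, Finset.coe_filter, hbigbox, Finset.mem_product,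
        Fintype.mem_piFinset, Finset.mem_Ico]
      constructor
      · intro h
        refine ⟨⟨fun i => (h.1 i : dyadic _ _), fun i => h.2.1 i, fun i => h.2.2.1 i⟩, h⟩
      · exact fun h => h.2
    have h1 : B d c₁ c₂ c₃ Xs Ys Zs =
        ({t : (Fin d → ℕ) × (Fin d → ℕ) × (Fin d → ℕ) | pred t}).ncard :=
      Nat.card_coe_set_eq _
    rw [h1, hset, Set.ncard_coe_finset]
  -- the tail map
  set τ : (Fin d → ℕ) × (Fin d → ℕ) × (Fin d → ℕ) → (Fin d → ℕ) × (Fin d → ℕ) × (Fin d → ℕ) :=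
    fun t => (fun i => if i = i0 then 0 else t.1 i, fun i => if i = i0 then 0 else t.2.1 i,
      fun i => if i = i0 then 0 else t.2.2 i) with hτ
  set n₀ : ℕ := ⌊48*(P₁:ℝ)/X⌋₊ + 1 with hn₀
  -- per-fiber bound
  have hfiber : ∀ aT ∈ Sfin.image τ, (Sfin.filter (fun t => τ t = aT)).card ≤ n₀ := by
    intro aT haT
    obtain ⟨ts, htsS, htsa⟩ := Finset.mem_image.1 haT
    set fib := Sfin.filter (fun t => τ t = aT) with hfib
    have htsfib : ts ∈ fib := Finset.mem_filter.2 ⟨htsS, htsa⟩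
    set ax := c₁ * ∏ i ∈ Finset.univ.erase i0, ts.1 i ^ (i.val + 1) with hax
    set bx := c₂ * ∏ i ∈ Finset.univ.erase i0, ts.2.1 i ^ (i.val + 1) with hbx
    set cx := c₃ * ∏ i ∈ Finset.univ.erase i0, ts.2.2 i ^ (i.val + 1) with hcx
    -- members of the fiber agree with ts away from i0
    have tail_eq : ∀ t ∈ fib, ∀ i, i ≠ i0 →
        t.1 i = ts.1 i ∧ t.2.1 i = ts.2.1 i ∧ t.2.2 i = ts.2.2 i := by
      intro t ht i hi
      have h := ((Finset.mem_filter.1 ht).2).trans htsa.symm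
      refine ⟨?_, ?_, ?_⟩
      · have := congrFun (congrArg (fun z => z.1) h) i
        simpa [hτ, if_neg hi] using this
      · have := congrFun (congrArg (fun z => z.2.1) h) i
        simpa [hτ, if_neg hi] using this
      · have := congrFun (congrArg (fun z => z.2.2) h) i
        simpa [hτ, if_neg hi] using this
    -- key product identities for fiber members
    have hsplit : ∀ t ∈ fib,
        c₁ * ∏ i, t.1 i ^ (i.val + 1) = ax * t.1 i0 ∧
        c₂ * ∏ i, t.2.1 i ^ (i.val + 1) = bx * t.2.1 i0 ∧
        c₃ * ∏ i, t.2.2 i ^ (i.val + 1) = cx * t.2.2 i0 := by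
      intro t ht
      refine ⟨?_, ?_, ?_⟩
      · rw [split_prod i0 hi0 t.1, hax]
        rw [Finset.prod_congr rfl (fun i hi => by
          rw [(tail_eq t ht i (Finset.ne_of_mem_erase hi)).1])]
        ring
      · rw [split_prod i0 hi0 t.2.1, hbx]
        rw [Finset.prod_congr rfl (fun i hi => by
          rw [(tail_eq t ht i (Finset.ne_of_mem_erase hi)).2.1])]
        ring
      · rw [split_prod i0 hi0 t.2.2, hcx]
        rw [Finset.prod_congr rfl (fun i hi => by
          rw [(tail_eq t ht i (Finset.ne_of_mem_erase hi)).2.2])]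
        ring
    -- dyadic facts for members of Sfin
    have hdy : ∀ t ∈ Sfin, (∀ i, dyadic (t.1 i) (Xs i)) ∧ (∀ i, dyadic (t.2.1 i) (Ys i)) ∧
        (∀ i, dyadic (t.2.2 i) (Zs i)) := by
      intro t ht
      have h := (Finset.mem_filter.1 ht).2
      exact ⟨h.1, h.2.1, h.2.2.1⟩
    have hfibS : ∀ t ∈ fib, t ∈ Sfin := fun t ht => (Finset.mem_filter.1 ht).1
    -- positivity of coefficients
    have haxpos : 0 < ax := by
      rw [hax]
      refine Nat.mul_pos hc₁ (Finset.prod_pos fun i _ => pow_pos ?_ _)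
      exact lt_of_lt_of_le (hXs i) ((hdy ts htsS).1 i).1
    have hbxpos : 0 < bx := by
      rw [hbx]
      refine Nat.mul_pos hc₂ (Finset.prod_pos fun i _ => pow_pos ?_ _)
      exact lt_of_lt_of_le (hYs i) ((hdy ts htsS).2.1 i).1
    have hcxpos : 0 < cx := by
      rw [hcx]
      refine Nat.mul_pos hc₃ (Finset.prod_pos fun i _ => pow_pos ?_ _)
      exact lt_of_lt_of_le (hZs i) ((hdy ts htsS).2.2 i).1
    -- project fiber to head triples
    set G := fib.image (fun t => (t.1 i0, t.2.1 i0, t.2.2 i0)) with hG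
    have hGinj : Set.InjOn (fun t : (Fin d → ℕ) × (Fin d → ℕ) × (Fin d → ℕ) =>
        (t.1 i0, t.2.1 i0, t.2.2 i0)) ↑fib := by
      intro t ht t' ht' hval
      simp only [Finset.mem_coe] at ht ht'
      simp only [Prod.ext_iff] at hval
      have e1 := tail_eq t ht
      have e2 := tail_eq t' ht'
      refine Prod.ext (funext fun i => ?_) (Prod.ext (funext fun i => ?_) (funext fun i => ?_))
      · by_cases hi : i = i0
        · rw [hi]; exact hval.1
        · rw [(e1 i hi).1, (e2 i hi).1]
      · by_cases hi : i = i0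
        · rw [hi]; exact hval.2.1
        · rw [(e1 i hi).2.1, (e2 i hi).2.1]
      · by_cases hi : i = i0
        · rw [hi]; exact hval.2.2
        · rw [(e1 i hi).2.2, (e2 i hi).2.2]
    have hGcard : G.card = fib.card := Finset.card_image_of_injOn hGinj
    -- apply the core counting lemma
    have hcore := linear_count ax bx cx (Xs i0) (Ys i0) (Zs i0) haxpos hbxpos hcxpos
      (hXs i0) (hYs i0) (hZs i0) G ?_ ?_ ?_
    rotate_left
    · -- box
      intro p hp
      obtain ⟨t, ht, rfl⟩ := Finset.mem_image.1 hp
      obtain ⟨h1, h2, h3⟩ := hdy t (hfibS t ht)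
      exact ⟨h1 i0, h2 i0, h3 i0⟩
    · -- equation
      intro p hp
      obtain ⟨t, ht, rfl⟩ := Finset.mem_image.1 hp
      obtain ⟨e1, e2, e3⟩ := hsplit t ht
      have heqt := ((Finset.mem_filter.1 (hfibS t ht)).2).2.2.2.1
      dsimp only
      rw [← e1, ← e2, ← e3]
      exact heqt
    · -- coprimality
      intro p hp
      obtain ⟨t, ht, rfl⟩ := Finset.mem_image.1 hp
      obtain ⟨e1, e2, e3⟩ := hsplit t ht
      have heqt := ((Finset.mem_filter.1 (hfibS t ht)).2).2.2.2.1
      have hgcdt := ((Finset.mem_filter.1 (hfibS t ht)).2).2.2.2.2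
      have hct := coprime_triple heqt
        (fun ρ hρ hdvd => prime_transfer hρ t.1 (fun i => i.val + 1) hdvd)
        (fun ρ hρ hdvd => prime_transfer hρ t.2.1 (fun i => i.val + 1) hdvd)
        (fun ρ hρ hdvd => prime_transfer hρ t.2.2 (fun i => i.val + 1) hdvd)
        hgcdt
      dsimp only
      rw [← e1, ← e2, ← e3]
      exact hct
    -- lower bound on M
    set M := max (ax * Xs i0) (max (bx * Ys i0) (cx * Zs i0)) with hM
    have hMX : X ≤ 2 * (M:ℝ) := by
      -- the z-term of ts dominates everything
      have heqts := ((Finset.mem_filter.1 htsS).2).2.2.2.1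
      obtain ⟨e1, e2, e3⟩ := hsplit ts htsfib
      have hzbig : max (∏ i, Xs i ^ (i.val + 1))
          (max (∏ i, Ys i ^ (i.val + 1)) (∏ i, Zs i ^ (i.val + 1)))
          ≤ c₃ * ∏ i, ts.2.2 i ^ (i.val + 1) := by
      -- three bounds
        have hxb : ∏ i, Xs i ^ (i.val + 1) ≤ c₁ * ∏ i, ts.1 i ^ (i.val + 1) := by
          calc ∏ i, Xs i ^ (i.val + 1) ≤ ∏ i, ts.1 i ^ (i.val + 1) :=
                Finset.prod_le_prod' fun i _ =>
                  Nat.pow_le_pow_left ((hdy ts htsS).1 i).1 _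
            _ ≤ c₁ * ∏ i, ts.1 i ^ (i.val + 1) := Nat.le_mul_of_pos_left _ hc₁
        have hyb : ∏ i, Ys i ^ (i.val + 1) ≤ c₂ * ∏ i, ts.2.1 i ^ (i.val + 1) := by
          calc ∏ i, Ys i ^ (i.val + 1) ≤ ∏ i, ts.2.1 i ^ (i.val + 1) :=
                Finset.prod_le_prod' fun i _ =>
                  Nat.pow_le_pow_left ((hdy ts htsS).2.1 i).1 _
            _ ≤ c₂ * ∏ i, ts.2.1 i ^ (i.val + 1) := Nat.le_mul_of_pos_left _ hc₂
        have hzb : ∏ i, Zs i ^ (i.val + 1) ≤ c₃ * ∏ i, ts.2.2 i ^ (i.val + 1) := by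
          calc ∏ i, Zs i ^ (i.val + 1) ≤ ∏ i, ts.2.2 i ^ (i.val + 1) :=
                Finset.prod_le_prod' fun i _ =>
                  Nat.pow_le_pow_left ((hdy ts htsS).2.2 i).1 _
            _ ≤ c₃ * ∏ i, ts.2.2 i ^ (i.val + 1) := Nat.le_mul_of_pos_left _ hc₃
        omega
      have hzM : c₃ * ∏ i, ts.2.2 i ^ (i.val + 1) ≤ 2 * M := by
        rw [e3]
        have hz2 : ts.2.2 i0 ≤ 2 * Zs i0 := le_of_lt ((hdy ts htsS).2.2 i0).2
        calc cx * ts.2.2 i0 ≤ cx * (2 * Zs i0) := Nat.mul_le_mul_left cx hz2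
          _ = 2 * (cx * Zs i0) := by ring
          _ ≤ 2 * M := Nat.mul_le_mul_left 2 (le_max_of_le_right (le_max_right _ _))
      have : X ≤ ((2 * M : ℕ) : ℝ) := le_trans hmax1 (by exact_mod_cast le_trans hzbig hzM)
      push_cast at this
      exact this
    have hMpos : 0 < M := lt_of_lt_of_le (Nat.mul_pos hcxpos (hZs i0))
      (le_max_of_le_right (le_max_right _ _))
    -- turn the core bound into the fiber bound
    rw [hGcard] at hcore
    have hreal : (fib.card : ℝ) * M ≤ 24 * P₁ + M := by exact_mod_cast hcore
    have hfr : (fib.card : ℝ) ≤ 48 * P₁ / X + 1 := by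
      rcases Nat.eq_zero_or_pos fib.card with h0 | h1
      · rw [h0]; push_cast; positivity
      · have hMr : (0:ℝ) < M := by exact_mod_cast hMpos
        have hf1 : (1:ℝ) ≤ fib.card := by exact_mod_cast h1
        have key : ((fib.card : ℝ) - 1) * X ≤ 48 * P₁ := by
          have k1 : ((fib.card : ℝ) - 1) * M ≤ 24 * P₁ := by linarith
          have k2 : ((fib.card : ℝ) - 1) * X ≤ ((fib.card : ℝ) - 1) * (2 * M) :=
            mul_le_mul_of_nonneg_left hMX (by linarith)
          nlinarith
        rw [div_add' _ _ _ hXpos.ne', le_div_iff₀ hXpos]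
        nlinarith
    have : (fib.card : ℝ) < n₀ + 1 := by
      rw [hn₀]
      push_cast
      have := Nat.lt_floor_add_one (48 * (P₁:ℝ) / X)
      linarith
    exact_mod_cast Nat.lt_add_one_iff.1 (by exact_mod_cast this)
  -- count: total ≤ n₀ * #tails
  have hcount : Sfin.card ≤ n₀ * (Sfin.image τ).card :=
    Finset.card_le_mul_card_image Sfin n₀ hfiber
  -- tails bound
  have htails : (Sfin.image τ).card * P₁ ≤ ∏ i, (Xs i * Ys i * Zs i) := by
    set tb := (Fintype.piFinset fun i => if i = i0 then ({0} : Finset ℕ)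
        else Finset.Ico (Xs i) (2*Xs i)) ×ˢ
      ((Fintype.piFinset fun i => if i = i0 then ({0} : Finset ℕ)
        else Finset.Ico (Ys i) (2*Ys i)) ×ˢ
       (Fintype.piFinset fun i => if i = i0 then ({0} : Finset ℕ)
        else Finset.Ico (Zs i) (2*Zs i))) with htb
    have hsub : Sfin.image τ ⊆ tb := by
      intro aT haT
      obtain ⟨t, ht, rfl⟩ := Finset.mem_image.1 haT
      obtain ⟨h1, h2, h3⟩ : (∀ i, dyadic (t.1 i) (Xs i)) ∧ (∀ i, dyadic (t.2.1 i) (Ys i)) ∧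
          (∀ i, dyadic (t.2.2 i) (Zs i)) := by
        have h := (Finset.mem_filter.1 ht).2
        exact ⟨h.1, h.2.1, h.2.2.1⟩
      rw [htb, Finset.mem_product]
      refine ⟨?_, Finset.mem_product.2 ⟨?_, ?_⟩⟩ <;>
        · rw [Fintype.mem_piFinset]
          intro i
          by_cases hi : i = i0
          · simp [hτ, hi]
          · simp only [hτ, if_neg hi, Finset.mem_Ico]
            first
            | exact ⟨(h1 i).1, (h1 i).2⟩
            | exact ⟨(h2 i).1, (h2 i).2⟩
            | exact ⟨(h3 i).1, (h3 i).2⟩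
    have hfac : ∀ (W : Fin d → ℕ),
        ∏ i, (if i = i0 then ({0} : Finset ℕ) else Finset.Ico (W i) (2*W i)).card
          = ∏ i ∈ Finset.univ.erase i0, W i := by
      intro W
      have hptw : ∀ i : Fin d,
          (if i = i0 then ({0} : Finset ℕ) else Finset.Ico (W i) (2*W i)).card
            = (if i = i0 then 1 else W i) := by
        intro i
        split
        · simp
        · rw [Nat.card_Ico]; omega
      rw [Finset.prod_congr rfl (fun i _ => hptw i),
        ← Finset.mul_prod_erase Finset.univ (fun i => if i = i0 then 1 else W i)
          (Finset.mem_univ i0)]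
      rw [if_pos rfl, one_mul]
      exact Finset.prod_congr rfl (fun i hi => if_neg (Finset.ne_of_mem_erase hi))
    have hcard_tb : tb.card = (∏ i ∈ Finset.univ.erase i0, Xs i) *
        ((∏ i ∈ Finset.univ.erase i0, Ys i) * (∏ i ∈ Finset.univ.erase i0, Zs i)) := by
      rw [htb, Finset.card_product, Finset.card_product,
        Fintype.card_piFinset, Fintype.card_piFinset, Fintype.card_piFinset,
        hfac Xs, hfac Ys, hfac Zs]
    have htbP : tb.card * P₁ = ∏ i, (Xs i * Ys i * Zs i) := by
      rw [hcard_tb, hP₁def, Finset.prod_mul_distrib, Finset.prod_mul_distrib,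
        ← Finset.mul_prod_erase Finset.univ Xs (Finset.mem_univ i0),
        ← Finset.mul_prod_erase Finset.univ Ys (Finset.mem_univ i0),
        ← Finset.mul_prod_erase Finset.univ Zs (Finset.mem_univ i0)]
      ring
    calc (Sfin.image τ).card * P₁ ≤ tb.card * P₁ :=
          Nat.mul_le_mul_right P₁ (Finset.card_le_card hsub)
      _ = ∏ i, (Xs i * Ys i * Zs i) := htbP
  -- final chain over the reals
  rw [hBeq]
  set T := (Sfin.image τ).card with hT
  have hc1 : (Sfin.card : ℝ) ≤ (n₀ : ℝ) * T := by exact_mod_cast hcount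
  have hTP : (T : ℝ) * P₁ ≤ 2 * X ^ lam := by
    have h1 : ((T * P₁ : ℕ) : ℝ) ≤ ((∏ i, (Xs i * Ys i * Zs i) : ℕ) : ℝ) := by
      exact_mod_cast htails
    calc (T:ℝ) * P₁ = ((T * P₁ : ℕ) : ℝ) := by push_cast; ring
      _ ≤ ((∏ i, (Xs i * Ys i * Zs i) : ℕ) : ℝ) := h1
      _ ≤ 2 * X ^ lam := hPu.le
  have hn₀r : (n₀ : ℝ) ≤ 48 * P₁ / X + 1 := by
    rw [hn₀]
    push_cast
    have := Nat.floor_le (show (0:ℝ) ≤ 48*(P₁:ℝ)/X by positivity)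
    linarith
  have hTpos : (0:ℝ) ≤ T := Nat.cast_nonneg T
  have hP₁r : (0:ℝ) < P₁ := by exact_mod_cast hP₁pos
  have hTle : (T:ℝ) ≤ 2 * X ^ lam / P₁ := by
    rw [le_div_iff₀ hP₁r]; exact hTP
  have hn₀pos : (0:ℝ) ≤ (n₀:ℝ) := Nat.cast_nonneg n₀
  calc (Sfin.card : ℝ) ≤ (n₀:ℝ) * T := hc1
    _ ≤ (48 * P₁ / X + 1) * T := mul_le_mul_of_nonneg_right hn₀r hTpos
    _ = 48 * ((T:ℝ) * P₁) / X + T := by ring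
    _ ≤ 48 * (2 * X^lam) / X + 2 * X^lam / P₁ := by
        have hstep1 : 48 * ((T:ℝ) * P₁) / X ≤ 48 * (2 * X^lam) / X := by
          rw [div_le_div_iff_of_pos_right hXpos]
          linarith
        linarith [hstep1, hTle]
    _ = 96 * (X^lam/X) + 2 * X^lam / P₁ := by ring
    _ = 96 * X^(lam - 1) + 2 * X^lam/P₁ := by
        rw [Real.rpow_sub hXpos, Real.rpow_one]
    _ ≤ 96 * (X^lam / (P₁:ℝ) + X^(lam-1)) := by
        have h2 : (0:ℝ) ≤ X^lam / P₁ := by positivity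
        have h4 : 2 * X^lam/(P₁:ℝ) = 2 * (X^lam/(P₁:ℝ)) := by ring
        linarith [h2, h4]
end

section
/- (Improved geometry bound, quadratic variables) For every positive integer d ≥ 2 and every ε > 0 there exists a constant C = C(d, ε) such that the following holds. Let λ > 0 and X ≥ 1 be real, and let c₁, c₂, c₃ and X₁,…,X_d, Y₁,…,Y_d, Z₁,…,Z_d be positive integers that are admissible for (λ, X). Then B_d(c, X, Y, Z) ≤ C · (X^{λ+ε} / (P₁P₂) + X^{λ−1+ε} · P₂). -/
set_option maxHeartbeats 2000000


open Finset

section pieces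
variable {d : ℕ}

lemma filter_lt_two (h0 : 0 < d) (h1 : 1 < d) : univ.filter (fun i : Fin d => i.val < 2) =
    {(⟨0, h0⟩ : Fin d), ⟨1, h1⟩} := by
  ext i
  simp only [mem_filter, mem_univ, true_and, mem_insert, mem_singleton, Fin.ext_iff]
  omega

lemma prod_split (h0 : 0 < d) (h1 : 1 < d) (f : Fin d → ℕ) :
    ∏ i, f i ^ (i.val + 1) = (f ⟨0, h0⟩ * f ⟨1, h1⟩ ^ 2) *
      ∏ i ∈ univ.filter (fun i : Fin d => ¬ i.val < 2), f i ^ (i.val + 1) := by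
  rw [← Finset.prod_filter_mul_prod_filter_not univ (fun i : Fin d => i.val < 2)]
  congr 1
  rw [filter_lt_two h0 h1]
  rw [Finset.prod_insert (by simp [Fin.ext_iff]), Finset.prod_singleton]
  show f ⟨0, h0⟩ ^ (0 + 1) * f ⟨1, h1⟩ ^ (1 + 1) = f ⟨0, h0⟩ * f ⟨1, h1⟩ ^ 2
  ring

lemma prod_split1 (h0 : 0 < d) (h1 : 1 < d) (f : Fin d → ℕ) :
    ∏ i, f i = (f ⟨0, h0⟩ * f ⟨1, h1⟩) *
      ∏ i ∈ univ.filter (fun i : Fin d => ¬ i.val < 2), f i := by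
  rw [← Finset.prod_filter_mul_prod_filter_not univ (fun i : Fin d => i.val < 2)]
  congr 1
  rw [filter_lt_two h0 h1]
  rw [Finset.prod_insert (by simp [Fin.ext_iff]), Finset.prod_singleton]

lemma cop3 {a b c a' b' c' k : ℕ} (ha : a' ∣ a ^ k) (hb : b' ∣ b ^ k) (hc : c' ∣ c ^ k)
    (h : Nat.gcd a (Nat.gcd b c) = 1) : Nat.gcd a' (Nat.gcd b' c') = 1 := by
  by_contra hne
  obtain ⟨p, hp, hpf⟩ := Nat.exists_prime_and_dvd hne
  have h1 : p ∣ a := hp.dvd_of_dvd_pow ((hpf.trans (Nat.gcd_dvd_left _ _)).trans ha)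
  have h2 : p ∣ b := hp.dvd_of_dvd_pow (((hpf.trans (Nat.gcd_dvd_right _ _)).trans
    (Nat.gcd_dvd_left _ _)).trans hb)
  have h3 : p ∣ c := hp.dvd_of_dvd_pow (((hpf.trans (Nat.gcd_dvd_right _ _)).trans
    (Nat.gcd_dvd_right _ _)).trans hc)
  have : p ∣ 1 := h ▸ Nat.dvd_gcd h1 (Nat.dvd_gcd h2 h3)
  exact hp.one_lt.ne' (Nat.dvd_one.1 this)

lemma core_form_dvd (h0 : 0 < d) (h1 : 1 < d) (c : ℕ) (f : Fin d → ℕ) :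
    (c * ∏ i ∈ univ.filter (fun i : Fin d => ¬ i.val < 2), f i ^ (i.val + 1)) *
      (f ⟨0, h0⟩ * f ⟨1, h1⟩) ∣ (c * ∏ i, f i) ^ (d + 1) := by
  have hh : (c * ∏ i, f i) ^ (d+1) = c ^ (d+1) * ∏ i, f i ^ (d+1) := by
    rw [mul_pow, ← Finset.prod_pow]
  rw [hh]
  have h2 : ∏ i, f i ^ (d+1) =
      (∏ i ∈ univ.filter (fun i : Fin d => i.val < 2), f i ^ (d+1)) *
      ∏ i ∈ univ.filter (fun i : Fin d => ¬ i.val < 2), f i ^ (d+1) :=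
    (Finset.prod_filter_mul_prod_filter_not univ _ _).symm
  rw [h2]
  have hc : c ∣ c ^ (d+1) := dvd_pow_self c (by omega)
  have hpair : f ⟨0, h0⟩ * f ⟨1, h1⟩ ∣
      ∏ i ∈ univ.filter (fun i : Fin d => i.val < 2), f i ^ (d+1) := by
    rw [filter_lt_two h0 h1, Finset.prod_insert (by simp [Fin.ext_iff]), Finset.prod_singleton]
    exact mul_dvd_mul (dvd_pow_self _ (by omega)) (dvd_pow_self _ (by omega))
  have htail : ∏ i ∈ univ.filter (fun i : Fin d => ¬ i.val < 2), f i ^ (i.val + 1) ∣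
      ∏ i ∈ univ.filter (fun i : Fin d => ¬ i.val < 2), f i ^ (d+1) := by
    apply Finset.prod_dvd_prod_of_dvd
    intro i _
    exact pow_dvd_pow _ (by omega)
  calc (c * ∏ i ∈ univ.filter (fun i : Fin d => ¬ i.val < 2), f i ^ (i.val + 1)) *
        (f ⟨0, h0⟩ * f ⟨1, h1⟩)
      ∣ (c ^ (d+1) * ∏ i ∈ univ.filter (fun i : Fin d => ¬ i.val < 2), f i ^ (d+1)) *
        ∏ i ∈ univ.filter (fun i : Fin d => i.val < 2), f i ^ (d+1) :=
        mul_dvd_mul (mul_dvd_mul hc htail) hpair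
    _ = c ^ (d+1) * ((∏ i ∈ univ.filter (fun i : Fin d => i.val < 2), f i ^ (d+1)) *
        ∏ i ∈ univ.filter (fun i : Fin d => ¬ i.val < 2), f i ^ (d+1)) := by ring

lemma tail_prod (h0 : 0 < d) (h1 : 1 < d) (W : Fin d → ℕ) :
    (∏ i, (if i.val < 2 then 1 else W i)) * (W ⟨0, h0⟩ * W ⟨1, h1⟩) = ∏ i, W i := by
  have ha : ∏ i, (if i.val < 2 then 1 else W i)
      = ∏ i ∈ univ.filter (fun i : Fin d => ¬ i.val < 2), W i := by
    rw [← Finset.prod_filter_mul_prod_filter_not univ (fun i : Fin d => i.val < 2)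
      (fun i => if i.val < 2 then 1 else W i)]
    rw [Finset.prod_congr rfl (fun i hi => if_pos (Finset.mem_filter.1 hi).2)]
    rw [Finset.prod_const_one, one_mul]
    exact Finset.prod_congr rfl (fun i hi => if_neg (Finset.mem_filter.1 hi).2)
  rw [ha, prod_split1 h0 h1 W]
  ring

lemma u_le_full (h0 : 0 < d) (h1 : 1 < d) (f W : Fin d → ℕ)
    (hW : ∀ i, 0 < W i) (hf : ∀ i, W i ≤ f i ∧ f i < 2 * W i) :
    f ⟨0, h0⟩ * f ⟨1, h1⟩ ^ 2 ≤ 2 ^ (∑ i : Fin d, (i.val + 1)) * ∏ i, W i ^ (i.val + 1) := by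
  have hstep : f ⟨0, h0⟩ * f ⟨1, h1⟩ ^ 2 ≤ ∏ i, f i ^ (i.val + 1) := by
    rw [prod_split h0 h1 f]
    apply Nat.le_mul_of_pos_right
    apply Finset.prod_pos
    intro i _
    exact pow_pos (lt_of_lt_of_le (hW i) (hf i).1) _
  refine le_trans hstep ?_
  calc ∏ i, f i ^ (i.val + 1) ≤ ∏ i, (2 * W i) ^ (i.val + 1) := by
        apply Finset.prod_le_prod'
        intro i _
        exact Nat.pow_le_pow_left (le_of_lt (hf i).2) _
    _ = (∏ i : Fin d, (2:ℕ) ^ (i.val + 1)) * ∏ i, W i ^ (i.val + 1) := by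
        rw [← Finset.prod_mul_distrib]
        exact Finset.prod_congr rfl (fun i _ => by rw [mul_pow])
    _ = 2 ^ (∑ i : Fin d, (i.val + 1)) * ∏ i, W i ^ (i.val + 1) := by
        rw [Finset.prod_pow_eq_pow_sum]

lemma tau_u {Cτ ε' X : ℝ} (hε'pos : 0 < ε') (hε'le : ε' ≤ 1) (hX0 : 0 < X)
    (hCτ1 : 1 ≤ Cτ)
    (hCτ : ∀ n : ℕ, n ≠ 0 → ((n.divisors.card : ℝ) ≤ Cτ * (n : ℝ) ^ ε')) (E : ℕ)
    (u : ℕ) (hu0 : u ≠ 0) (huB : (u : ℝ) ≤ 2 ^ E * X) :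
    ((u.divisors.card : ℕ) : ℝ) ≤ Cτ * (2 ^ E * X ^ ε') := by
  have h1 := hCτ u hu0
  have h2 : ((u : ℝ)) ^ ε' ≤ ((2:ℝ) ^ E * X) ^ ε' :=
    Real.rpow_le_rpow (Nat.cast_nonneg u) huB hε'pos.le
  have h3 : ((2:ℝ) ^ E * X) ^ ε' = ((2:ℝ) ^ E) ^ ε' * X ^ ε' :=
    Real.mul_rpow (by positivity) hX0.le
  have h4 : ((2:ℝ) ^ E) ^ ε' ≤ (2:ℝ) ^ E := by
    calc ((2:ℝ) ^ E) ^ ε' ≤ ((2:ℝ) ^ E) ^ (1:ℝ) :=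
          Real.rpow_le_rpow_of_exponent_le (one_le_pow₀ one_le_two) hε'le
      _ = (2:ℝ) ^ E := Real.rpow_one _
  have h5 : ((u:ℝ)) ^ ε' ≤ (2:ℝ) ^ E * X ^ ε' := by
    rw [h3] at h2
    refine le_trans h2 ?_
    apply mul_le_mul_of_nonneg_right h4 (Real.rpow_nonneg hX0.le _)
  calc ((u.divisors.card : ℕ) : ℝ) ≤ Cτ * (u : ℝ) ^ ε' := h1
    _ ≤ Cτ * ((2:ℝ) ^ E * X ^ ε') := by
        apply mul_le_mul_of_nonneg_left h5 (by linarith)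

end pieces



open Finset in
lemma tau_bound (ε : ℝ) (hε : 0 < ε) :
    ∃ C : ℝ, 1 ≤ C ∧ ∀ n : ℕ, n ≠ 0 → (n.divisors.card : ℝ) ≤ C * (n : ℝ) ^ ε := by
  classical
  set k : ℕ := ⌈2 / ε⌉₊ with hk
  have hk1 : 1 ≤ k := Nat.one_le_iff_ne_zero.2 (by
    simp [hk, Nat.ceil_eq_zero, not_le]
    positivity)
  have hkε : 2 / ε ≤ k := Nat.le_ceil _
  set P : ℕ := 2 ^ k with hP
  have hPpos : (0:ℝ) < P := by positivity
  set δ : ℝ := ε / (2 * P) with hδ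
  have hδpos : 0 < δ := by positivity
  have hδ2 : δ * P = ε / 2 := by
    rw [hδ]; field_simp
  set c₀ : ℝ := 2 / δ + 1 with hc₀
  have hc₀1 : 1 ≤ c₀ := by
    have h2 : 0 ≤ 2 / δ := by positivity
    rw [hc₀]; linarith
  refine ⟨c₀ ^ P, one_le_pow₀ hc₀1, ?_⟩
  intro n hn
  have hn1 : (1:ℝ) ≤ (n:ℝ) := by exact_mod_cast Nat.one_le_iff_ne_zero.2 hn
  have hn0 : (0:ℝ) < (n:ℝ) := by linarith
  have htau := Nat.card_divisors hn
  set a : ℕ → ℕ := fun p => n.factorization p with ha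
  have hfull : ∏ p ∈ n.primeFactors, p ^ a p = n := by
    rw [ha, ← Nat.prod_factorization_eq_prod_primeFactors (fun p k => p ^ k)]
    exact Nat.factorization_prod_pow_eq_self hn
  -- split into small and large primes
  set Sm := n.primeFactors.filter (fun p => p < P) with hSm
  set Lg := n.primeFactors.filter (fun p => ¬ p < P) with hLg
  have hsplit : (n.divisors.card : ℝ)
      = (∏ p ∈ Sm, ((a p : ℝ) + 1)) * (∏ p ∈ Lg, ((a p : ℝ) + 1)) := by
    rw [hSm, hLg, Finset.prod_filter_mul_prod_filter_not, htau]
    push_cast; rfl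
  -- large primes: ∏ (a p + 1) ≤ n ^ (ε/2)
  have hlarge : (∏ p ∈ Lg, ((a p : ℝ) + 1)) ≤ (n:ℝ) ^ (ε/2) := by
    have step1 : ∀ p ∈ Lg, ((a p : ℝ) + 1) ≤ ((p ^ a p : ℕ) : ℝ) ^ (ε/2) := by
      intro p hp
      have hpP : P ≤ p := by
        have := Finset.mem_filter.1 hp
        omega
      have h1 : ((a p : ℝ) + 1) ≤ (2:ℝ) ^ (a p : ℕ) := by
        exact_mod_cast Nat.succ_le_of_lt (Nat.lt_two_pow_self (n := a p))
      have h2 : ((2:ℝ) ^ (a p : ℕ)) ≤ ((p:ℝ) ^ (a p : ℕ)) ^ (ε/2) := by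
        have hc : ((p:ℝ) ^ a p) ^ (ε/2) = (p:ℝ) ^ ((a p : ℝ) * (ε/2)) := by
          rw [← Real.rpow_natCast (p:ℝ) (a p), ← Real.rpow_mul (by positivity)]
        rw [hc]
        have hpk : (2:ℝ) ^ (k : ℕ) ≤ (p:ℝ) := by
          exact_mod_cast hpP
        have hkε2 : (2:ℝ) ≤ (k:ℝ) * ε := by
          have := (div_le_iff₀ hε).1 hkε
          linarith
        calc (2:ℝ) ^ (a p : ℕ) = (2:ℝ) ^ ((a p : ℝ)) := by
              rw [Real.rpow_natCast]
          _ ≤ (2:ℝ) ^ ((k : ℝ) * ((a p : ℝ) * (ε/2))) := by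
              apply Real.rpow_le_rpow_of_exponent_le one_le_two
              nlinarith [mul_le_mul_of_nonneg_left hkε2 (Nat.cast_nonneg (a p))]
          _ = ((2:ℝ) ^ ((k:ℝ))) ^ ((a p : ℝ) * (ε/2)) := by
              rw [← Real.rpow_mul (by norm_num)]
          _ ≤ (p:ℝ) ^ ((a p : ℝ) * (ε/2)) := by
              apply Real.rpow_le_rpow (by positivity) _ (by positivity)
              rw [Real.rpow_natCast]; exact hpk
      calc ((a p : ℝ) + 1) ≤ (2:ℝ) ^ (a p : ℕ) := h1
        _ ≤ ((p:ℝ) ^ (a p : ℕ)) ^ (ε/2) := h2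
        _ = ((p ^ a p : ℕ) : ℝ) ^ (ε/2) := by push_cast; rfl
    calc (∏ p ∈ Lg, ((a p : ℝ) + 1)) ≤ ∏ p ∈ Lg, ((p ^ a p : ℕ) : ℝ) ^ (ε/2) := by
          apply Finset.prod_le_prod (fun p _ => by positivity) step1
      _ = ((∏ p ∈ Lg, (p ^ a p) : ℕ) : ℝ) ^ (ε/2) := by
          rw [Nat.cast_prod]
          exact Real.finset_prod_rpow Lg _ (fun p _ => by positivity) (ε/2)
      _ ≤ (n:ℝ) ^ (ε/2) := by
          apply Real.rpow_le_rpow (by positivity) _ (by positivity)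
          have hdvd : (∏ p ∈ Lg, p ^ a p) ∣ n := by
            have h1 : (∏ p ∈ Lg, p ^ a p) ∣ (∏ p ∈ n.primeFactors, p ^ a p) :=
              Finset.prod_dvd_prod_of_subset _ _ _ (Finset.filter_subset _ _)
            rwa [hfull] at h1
          exact_mod_cast Nat.le_of_dvd (Nat.pos_of_ne_zero hn) hdvd
  -- small primes
  have hsmall : (∏ p ∈ Sm, ((a p : ℝ) + 1)) ≤ c₀ ^ P * (n:ℝ) ^ (ε/2) := by
    have hlogb : ∀ p ∈ Sm, ((a p : ℝ) + 1) ≤ c₀ * (n:ℝ) ^ δ := by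
      intro p hp
      have hpprime : p.Prime := Nat.prime_of_mem_primeFactors (Finset.mem_filter.1 hp).1
      have hdvd : p ^ a p ∣ n := Nat.ordProj_dvd n p
      have h2a : (2:ℝ) ^ (a p : ℕ) ≤ (n:ℝ) := by
        have : 2 ^ a p ≤ p ^ a p := Nat.pow_le_pow_left hpprime.two_le _
        have := le_trans this (Nat.le_of_dvd (Nat.pos_of_ne_zero hn) hdvd)
        exact_mod_cast this
      -- a p ≤ logb 2 n ≤ 2 log n ≤ 2 n^δ/δ
      have hlog : (a p : ℝ) * Real.log 2 ≤ Real.log n := by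
        calc (a p : ℝ) * Real.log 2 = Real.log ((2:ℝ) ^ (a p : ℕ)) := by
              rw [Real.log_pow]
          _ ≤ Real.log n := Real.log_le_log (by positivity) h2a
      have hlog2 : (0.6931:ℝ) < Real.log 2 := by
        have := Real.log_two_gt_d9; linarith
      have hap : (a p : ℝ) ≤ 2 * Real.log n := by
        nlinarith [(Nat.cast_nonneg (a p) : (0:ℝ) ≤ (a p : ℝ)), Real.log_nonneg hn1]
      have hlogn : Real.log n ≤ (n:ℝ) ^ δ / δ := Real.log_le_rpow_div hn0.le hδpos
      have hrp1 : (1:ℝ) ≤ (n:ℝ) ^ δ := Real.one_le_rpow hn1 hδpos.le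
      calc ((a p : ℝ) + 1) ≤ 2 * ((n:ℝ)^δ/δ) + 1 := by linarith
        _ ≤ (2/δ) * (n:ℝ)^δ + 1 * (n:ℝ)^δ := by
            rw [one_mul]
            have : 2 * ((n:ℝ)^δ/δ) = (2/δ) * (n:ℝ)^δ := by ring
            linarith [this]
        _ = c₀ * (n:ℝ)^δ := by rw [hc₀]; ring
    have hcard : Sm.card ≤ P := by
      have hsub : Sm ⊆ Finset.range P := by
        intro p hp
        exact Finset.mem_range.2 (Finset.mem_filter.1 hp).2
      simpa using Finset.card_le_card hsub
    have hfac1 : (1:ℝ) ≤ c₀ * (n:ℝ) ^ δ := by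
      have hrp1 : (1:ℝ) ≤ (n:ℝ) ^ δ := Real.one_le_rpow hn1 hδpos.le
      nlinarith
    calc (∏ p ∈ Sm, ((a p : ℝ) + 1)) ≤ ∏ _p ∈ Sm, (c₀ * (n:ℝ)^δ) :=
          Finset.prod_le_prod (fun p _ => by positivity) hlogb
      _ = (c₀ * (n:ℝ)^δ) ^ (Sm.card) := Finset.prod_const _
      _ ≤ (c₀ * (n:ℝ)^δ) ^ P := pow_le_pow_right₀ hfac1 hcard
      _ = c₀ ^ P * ((n:ℝ)^δ) ^ (P:ℕ) := by rw [mul_pow]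
      _ = c₀ ^ P * (n:ℝ) ^ (ε/2) := by
          rw [← Real.rpow_natCast ((n:ℝ)^δ) P, ← Real.rpow_mul hn0.le, hδ2]
  -- combine
  have hτnn : (0:ℝ) ≤ ∏ p ∈ Lg, ((a p : ℝ) + 1) := Finset.prod_nonneg (fun p _ => by positivity)
  have hsm_nn : (0:ℝ) ≤ ∏ p ∈ Sm, ((a p : ℝ) + 1) := Finset.prod_nonneg (fun p _ => by positivity)
  calc (n.divisors.card : ℝ) = (∏ p ∈ Sm, ((a p : ℝ) + 1)) * (∏ p ∈ Lg, ((a p : ℝ) + 1)) := hsplit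
    _ ≤ (c₀ ^ P * (n:ℝ) ^ (ε/2)) * (n:ℝ) ^ (ε/2) := by
        apply mul_le_mul hsmall hlarge hτnn
        positivity
    _ = c₀ ^ P * ((n:ℝ) ^ (ε/2) * (n:ℝ) ^ (ε/2)) := by ring
    _ = c₀ ^ P * (n:ℝ) ^ ε := by
        rw [← Real.rpow_add hn0]; norm_num


lemma prime_dvd_quad {p K a₀ a₁ : ℕ} (hp : p.Prime) (h : p ∣ K * (a₀ * a₁ ^ 2)) :
    p ∣ K * (a₀ * a₁) := by
  rcases hp.dvd_mul.1 h with h | h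
  · exact dvd_mul_of_dvd_left h _
  · rcases hp.dvd_mul.1 h with h | h
    · exact dvd_mul_of_dvd_right (dvd_mul_of_dvd_left h _) _
    · exact dvd_mul_of_dvd_right (dvd_mul_of_dvd_right (hp.dvd_of_dvd_pow h) _) _

open Finset in
lemma core {α : Type*} [DecidableEq α] (S : Finset α)
    (x₀ x₁ y₀ y₁ z₀ z₁ : α → ℕ) (A B C : ℕ)
    (X₀ X₁ Y₀ Y₁ Z₀ Z₁ : ℕ)
    (hC : 0 < C)
    (hposx₀ : 0 < X₀) (hposx₁ : 0 < X₁) (hposy₀ : 0 < Y₀) (hposy₁ : 0 < Y₁)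
    (hposz₀ : 0 < Z₀) (hposz₁ : 0 < Z₁)
    (hx₀ : ∀ s ∈ S, X₀ ≤ x₀ s ∧ x₀ s < 2 * X₀)
    (hx₁ : ∀ s ∈ S, X₁ ≤ x₁ s ∧ x₁ s < 2 * X₁)
    (hy₀ : ∀ s ∈ S, Y₀ ≤ y₀ s ∧ y₀ s < 2 * Y₀)
    (hy₁ : ∀ s ∈ S, Y₁ ≤ y₁ s ∧ y₁ s < 2 * Y₁)
    (hz₀ : ∀ s ∈ S, Z₀ ≤ z₀ s ∧ z₀ s < 2 * Z₀)
    (hz₁ : ∀ s ∈ S, Z₁ ≤ z₁ s ∧ z₁ s < 2 * Z₁)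
    (heq : ∀ s ∈ S, A * (x₀ s * x₁ s ^ 2) + B * (y₀ s * y₁ s ^ 2) = C * (z₀ s * z₁ s ^ 2))
    (hgcd : ∀ s ∈ S, Nat.gcd (A * (x₀ s * x₁ s))
      (Nat.gcd (B * (y₀ s * y₁ s)) (C * (z₀ s * z₁ s))) = 1)
    (hinj : ∀ s ∈ S, ∀ s' ∈ S, x₀ s = x₀ s' → x₁ s = x₁ s' → y₀ s = y₀ s' →
      y₁ s = y₁ s' → z₀ s = z₀ s' → z₁ s = z₁ s' → s = s')
    (Dτ : ℝ) (hDτ0 : 0 ≤ Dτ)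
    (hDτ : ∀ s ∈ S, (((x₀ s * x₁ s ^ 2).divisors.card *
        ((y₀ s * y₁ s ^ 2).divisors.card * (z₀ s * z₁ s ^ 2).divisors.card) : ℕ) : ℝ) ≤ Dτ) :
    (S.card : ℝ) ≤ Dτ * (512 * ((X₀ * X₁ ^ 2 : ℕ) : ℝ) * ((Y₀ * Y₁ ^ 2 : ℕ) : ℝ) / (C : ℝ) + 1) := by
  classical
  set u : α → ℕ := fun s => x₀ s * x₁ s ^ 2 with hu
  set v : α → ℕ := fun s => y₀ s * y₁ s ^ 2 with hv
  set w : α → ℕ := fun s => z₀ s * z₁ s ^ 2 with hw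
  set U : ℕ := X₀ * X₁ ^ 2 with hU
  set V : ℕ := Y₀ * Y₁ ^ 2 with hV
  have heq' : ∀ s ∈ S, A * u s + B * v s = C * w s := heq
  have hupos : ∀ s ∈ S, U ≤ u s ∧ u s < 8 * U := by
    intro s hs
    obtain ⟨h1, h2⟩ := hx₀ s hs; obtain ⟨h3, h4⟩ := hx₁ s hs
    constructor
    · exact Nat.mul_le_mul h1 (Nat.pow_le_pow_left h3 2)
    · calc u s = x₀ s * x₁ s ^ 2 := rfl
        _ < (2 * X₀) * (2 * X₁) ^ 2 := by
          apply Nat.mul_lt_mul_of_lt_of_le h2 (Nat.pow_le_pow_left (le_of_lt h4) 2)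
          positivity
        _ = 8 * U := by rw [hU]; ring
  have hvpos : ∀ s ∈ S, V ≤ v s ∧ v s < 8 * V := by
    intro s hs
    obtain ⟨h1, h2⟩ := hy₀ s hs; obtain ⟨h3, h4⟩ := hy₁ s hs
    constructor
    · exact Nat.mul_le_mul h1 (Nat.pow_le_pow_left h3 2)
    · calc v s = y₀ s * y₁ s ^ 2 := rfl
        _ < (2 * Y₀) * (2 * Y₁) ^ 2 := by
          apply Nat.mul_lt_mul_of_lt_of_le h2 (Nat.pow_le_pow_left (le_of_lt h4) 2)
          positivity
        _ = 8 * V := by rw [hV]; ring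
  have hUpos : 0 < U := by positivity
  have hVpos : 0 < V := by positivity
  have hu0 : ∀ s ∈ S, 0 < u s := fun s hs => lt_of_lt_of_le hUpos (hupos s hs).1
  have hv0 : ∀ s ∈ S, 0 < v s := fun s hs => lt_of_lt_of_le hVpos (hvpos s hs).1
  have hw0 : ∀ s ∈ S, 0 < w s := by
    intro s hs
    have := (hz₀ s hs).1; have := (hz₁ s hs).1
    have : 0 < z₀ s := lt_of_lt_of_le hposz₀ (hz₀ s hs).1
    have : 0 < z₁ s := lt_of_lt_of_le hposz₁ (hz₁ s hs).1
    positivity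
  -- key divisibility: any prime dividing u s, v s, w s divides nothing
  have hprime_u : ∀ s ∈ S, ∀ p : ℕ, p.Prime → p ∣ u s → p ∣ A * (x₀ s * x₁ s) :=
    fun s _ p hp hdvd => prime_dvd_quad hp (dvd_mul_of_dvd_right hdvd A)
  have hprime_v : ∀ s ∈ S, ∀ p : ℕ, p.Prime → p ∣ v s → p ∣ B * (y₀ s * y₁ s) :=
    fun s _ p hp hdvd => prime_dvd_quad hp (dvd_mul_of_dvd_right hdvd B)
  have hprime_w : ∀ s ∈ S, ∀ p : ℕ, p.Prime → p ∣ w s → p ∣ C * (z₀ s * z₁ s) :=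
    fun s _ p hp hdvd => prime_dvd_quad hp (dvd_mul_of_dvd_right hdvd C)
  -- Step 1: equal cross ratios imply equal (u,v,w)
  have step1 : ∀ s ∈ S, ∀ s' ∈ S, v s * u s' = v s' * u s →
      u s = u s' ∧ v s = v s' ∧ w s = w s' := by
    intro s hs s' hs' hvu
    have h1 := heq' s hs
    have h2 := heq' s' hs'
    have hwu : w s * u s' = w s' * u s := by
      have hC' : C * (w s * u s') = C * (w s' * u s) := by
        calc C * (w s * u s') = (A * u s + B * v s) * u s' := by rw [h1]; ring
          _ = A * (u s * u s') + B * (v s * u s') := by ring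
          _ = A * (u s * u s') + B * (v s' * u s) := by rw [hvu]
          _ = (A * u s' + B * v s') * u s := by ring
          _ = C * (w s' * u s) := by rw [h2]; ring
      exact Nat.eq_of_mul_eq_mul_left hC hC'
    set g : ℕ := Nat.gcd (u s) (u s') with hg
    have hgpos : 0 < g := Nat.gcd_pos_of_pos_left _ (hu0 s hs)
    have hge : g * (u s / g) = u s := Nat.mul_div_cancel' (Nat.gcd_dvd_left _ _)
    have hge' : g * (u s' / g) = u s' := Nat.mul_div_cancel' (Nat.gcd_dvd_right _ _)
    set e : ℕ := u s / g with he
    set e' : ℕ := u s' / g with he'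
    have hcop : Nat.Coprime e e' := Nat.coprime_div_gcd_div_gcd hgpos
    have hv_e : v s * e' = v s' * e := by
      have : v s * (g * e') = v s' * (g * e) := by rw [hge, hge']; exact hvu
      apply Nat.eq_of_mul_eq_mul_left hgpos
      calc g * (v s * e') = v s * (g * e') := by ring
        _ = v s' * (g * e) := this
        _ = g * (v s' * e) := by ring
    have hw_e : w s * e' = w s' * e := by
      have : w s * (g * e') = w s' * (g * e) := by rw [hge, hge']; exact hwu
      apply Nat.eq_of_mul_eq_mul_left hgpos
      calc g * (w s * e') = w s * (g * e') := by ring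
        _ = w s' * (g * e) := this
        _ = g * (w s' * e) := by ring
    -- e' divides v s', w s', u s'
    have he'_dvd_v : e' ∣ v s' :=
      (Nat.Coprime.dvd_of_dvd_mul_right hcop.symm) ⟨v s, by rw [← hv_e]; ring⟩
    have he'_dvd_w : e' ∣ w s' :=
      (Nat.Coprime.dvd_of_dvd_mul_right hcop.symm) ⟨w s, by rw [← hw_e]; ring⟩
    have he'_dvd_u : e' ∣ u s' := ⟨g, by rw [← hge']; ring⟩
    have he_dvd_v : e ∣ v s :=
      (Nat.Coprime.dvd_of_dvd_mul_right hcop) ⟨v s', by rw [hv_e]; ring⟩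
    have he_dvd_w : e ∣ w s :=
      (Nat.Coprime.dvd_of_dvd_mul_right hcop) ⟨w s', by rw [hw_e]; ring⟩
    have he_dvd_u : e ∣ u s := ⟨g, by rw [← hge]; ring⟩
    have triv : ∀ t ∈ S, ∀ f : ℕ, f ∣ u t → f ∣ v t → f ∣ w t → f = 1 := by
      intro t ht f hfu hfv hfw
      by_contra hne
      obtain ⟨p, hp, hpf⟩ := Nat.exists_prime_and_dvd hne
      have h1 : p ∣ A * (x₀ t * x₁ t) := hprime_u t ht p hp (hpf.trans hfu)
      have h2 : p ∣ B * (y₀ t * y₁ t) := hprime_v t ht p hp (hpf.trans hfv)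
      have h3 : p ∣ C * (z₀ t * z₁ t) := hprime_w t ht p hp (hpf.trans hfw)
      have : p ∣ 1 := hgcd t ht ▸ Nat.dvd_gcd h1 (Nat.dvd_gcd h2 h3)
      exact hp.one_lt.ne' (Nat.dvd_one.1 this)
    have he'1 : e' = 1 := triv s' hs' e' he'_dvd_u he'_dvd_v he'_dvd_w
    have he1 : e = 1 := triv s hs e he_dvd_u he_dvd_v he_dvd_w
    have huu : u s = u s' := by
      rw [← hge, ← hge', he'1, he1]
    have hvv : v s = v s' := by
      have := hvu
      rw [huu] at this
      exact Nat.eq_of_mul_eq_mul_right (hu0 s' hs') this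
    have hww : w s = w s' := by
      have := hwu
      rw [huu] at this
      exact Nat.eq_of_mul_eq_mul_right (hu0 s' hs') this
    exact ⟨huu, hvv, hww⟩
  -- Step 2: distinct (u,v) forces large determinant
  have step2 : ∀ s ∈ S, ∀ s' ∈ S, v s * u s' ≠ v s' * u s →
      (C : ℤ) ≤ |(v s : ℤ) * (u s' : ℤ) - (v s' : ℤ) * (u s : ℤ)| := by
    intro s hs s' hs' hne
    have hCA : Nat.Coprime C A := by
      rw [Nat.coprime_iff_gcd_eq_one]
      by_contra hne1
      obtain ⟨p, hp, hpf⟩ := Nat.exists_prime_and_dvd hne1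
      have hpC : p ∣ C := hpf.trans (Nat.gcd_dvd_left _ _)
      have hpA : p ∣ A := hpf.trans (Nat.gcd_dvd_right _ _)
      have h1 : p ∣ A * (x₀ s * x₁ s) := dvd_mul_of_dvd_left hpA _
      have h3 : p ∣ C * (z₀ s * z₁ s) := dvd_mul_of_dvd_left hpC _
      have hBv : p ∣ B * v s := by
        have hAu : p ∣ A * u s := dvd_mul_of_dvd_left hpA _
        have hCw : p ∣ C * w s := dvd_mul_of_dvd_left hpC _
        have hsub : B * v s = C * w s - A * u s := by
          rw [← heq' s hs]; omega
        rw [hsub]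
        exact Nat.dvd_sub hCw hAu
      have h2 : p ∣ B * (y₀ s * y₁ s) := by
        rcases hp.dvd_mul.1 hBv with h | h
        · exact dvd_mul_of_dvd_left h _
        · exact hprime_v s hs p hp h
      have : p ∣ 1 := hgcd s hs ▸ Nat.dvd_gcd h1 (Nat.dvd_gcd h2 h3)
      exact hp.one_lt.ne' (Nat.dvd_one.1 this)
    -- integer identity
    have h1 : (A : ℤ) * (u s : ℤ) + (B : ℤ) * (v s : ℤ) = (C : ℤ) * (w s : ℤ) := by
      exact_mod_cast heq' s hs
    have h2 : (A : ℤ) * (u s' : ℤ) + (B : ℤ) * (v s' : ℤ) = (C : ℤ) * (w s' : ℤ) := by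
      exact_mod_cast heq' s' hs'
    set Δ : ℤ := (v s : ℤ) * (u s' : ℤ) - (v s' : ℤ) * (u s : ℤ) with hΔ
    have hident : (A : ℤ) * Δ = (C : ℤ) * ((v s : ℤ) * (w s' : ℤ) - (v s' : ℤ) * (w s : ℤ)) := by
      rw [hΔ]
      linear_combination (v s : ℤ) * h2 - (v s' : ℤ) * h1
    have hCdvd : (C : ℤ) ∣ (A : ℤ) * Δ := Dvd.intro _ hident.symm
    have hcop : IsCoprime (C : ℤ) (A : ℤ) := by
      rw [Int.isCoprime_iff_gcd_eq_one]
      exact_mod_cast hCA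
    have hCΔ : (C : ℤ) ∣ Δ := hcop.dvd_of_dvd_mul_left hCdvd
    have hΔne : Δ ≠ 0 := by
      rw [hΔ]
      intro habs
      apply hne
      have : (v s : ℤ) * (u s' : ℤ) = (v s' : ℤ) * (u s : ℤ) := by linarith
      exact_mod_cast this
    calc (C : ℤ) ≤ |Δ| := Int.le_of_dvd (abs_pos.mpr hΔne) ((dvd_abs _ _).mpr hCΔ)
      _ = |(v s : ℤ) * (u s' : ℤ) - (v s' : ℤ) * (u s : ℤ)| := by rw [hΔ]
  -- bucket map
  set r : α → ℝ := fun s => ((v s : ℝ) * (8 * (U : ℝ)) ^ 2) / ((u s : ℝ) * (C : ℝ)) with hr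
  set F : α → ℤ := fun s => ⌊r s⌋ with hF
  set M : ℤ := ⌊(512 * (U : ℝ) * (V : ℝ)) / (C : ℝ)⌋ with hM
  have hCr : (0:ℝ) < (C:ℝ) := by exact_mod_cast hC
  have hUr : (0:ℝ) < (U:ℝ) := by exact_mod_cast hUpos
  have hVr : (0:ℝ) < (V:ℝ) := by exact_mod_cast hVpos
  have hMnonneg : (0:ℤ) ≤ M := by
    rw [hM]
    apply Int.floor_nonneg.2
    positivity
  have hFmem : ∀ s ∈ S, F s ∈ Finset.Icc (0:ℤ) M := by
    intro s hs
    have hus : (0:ℝ) < (u s : ℝ) := by exact_mod_cast hu0 s hs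
    rw [Finset.mem_Icc]
    constructor
    · apply Int.floor_nonneg.2
      positivity
    · apply Int.floor_le_floor
      have hnum : (v s : ℝ) * (8 * (U : ℝ)) ^ 2 ≤ 512 * (U:ℝ) ^ 2 * (V:ℝ) := by
        have h8 : (v s : ℝ) ≤ 8 * (V:ℝ) := by
          exact_mod_cast le_of_lt (hvpos s hs).2
        nlinarith
      have hden : (U : ℝ) * (C : ℝ) ≤ (u s : ℝ) * (C : ℝ) := by
        have : (U:ℝ) ≤ (u s : ℝ) := by exact_mod_cast (hupos s hs).1
        nlinarith
      calc r s ≤ (512 * (U:ℝ)^2 * (V:ℝ)) / ((U:ℝ) * (C:ℝ)) := by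
            apply div_le_div₀ (by positivity) hnum (by positivity) hden
        _ = (512 * (U:ℝ) * (V:ℝ)) / (C:ℝ) := by
            field_simp
  have hsame : ∀ s ∈ S, ∀ s' ∈ S, F s = F s' →
      u s = u s' ∧ v s = v s' ∧ w s = w s' := by
    intro s hs s' hs' hFeq
    by_cases hvu : v s * u s' = v s' * u s
    · exact step1 s hs s' hs' hvu
    · exfalso
      have hdet := step2 s hs s' hs' hvu
      have hus : (0:ℝ) < (u s : ℝ) := by exact_mod_cast hu0 s hs
      have hus' : (0:ℝ) < (u s' : ℝ) := by exact_mod_cast hu0 s' hs'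
      have habs : |r s - r s'| < 1 := by
        have l1 := Int.floor_le (r s)
        have l2 := Int.lt_floor_add_one (r s)
        have l3 := Int.floor_le (r s')
        have l4 := Int.lt_floor_add_one (r s')
        have hFeq' : ⌊r s⌋ = ⌊r s'⌋ := hFeq
        have e : ((⌊r s⌋ : ℤ) : ℝ) = ((⌊r s'⌋ : ℤ) : ℝ) := by exact_mod_cast hFeq'
        rw [abs_sub_lt_iff]
        constructor <;> linarith
      have hdiff : r s - r s' = ((8 * (U:ℝ)) ^ 2 *
          ((v s : ℝ) * (u s' : ℝ) - (v s' : ℝ) * (u s : ℝ))) /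
          ((u s : ℝ) * (u s' : ℝ) * (C : ℝ)) := by
        rw [hr]
        field_simp
      have hdetr : (C:ℝ) ≤ |(v s : ℝ) * (u s' : ℝ) - (v s' : ℝ) * (u s : ℝ)| := by
        have := hdet
        have hcast : |(v s : ℝ) * (u s' : ℝ) - (v s' : ℝ) * (u s : ℝ)|
            = ((|(v s : ℤ) * (u s' : ℤ) - (v s' : ℤ) * (u s : ℤ)| : ℤ) : ℝ) := by
          push_cast
          rfl
        rw [hcast]
        exact_mod_cast this
      have huu' : (u s : ℝ) * (u s' : ℝ) < 64 * (U:ℝ)^2 := by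
        have h1 : (u s : ℝ) < 8 * (U:ℝ) := by exact_mod_cast (hupos s hs).2
        have h2 : (u s' : ℝ) < 8 * (U:ℝ) := by exact_mod_cast (hupos s' hs').2
        nlinarith
      have : (1:ℝ) < |r s - r s'| := by
        rw [hdiff, abs_div, abs_mul]
        have hden : |(u s : ℝ) * (u s' : ℝ) * (C : ℝ)| = (u s : ℝ) * (u s' : ℝ) * (C : ℝ) := by
          rw [abs_of_pos]; positivity
        have hnum8 : |(8 * (U:ℝ)) ^ 2| = 64 * (U:ℝ)^2 := by
          rw [abs_of_pos] <;> nlinarith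
        rw [hden, hnum8]
        rw [lt_div_iff₀ (by positivity)]
        have : 64 * (U:ℝ)^2 * (C:ℝ) ≤ 64 * (U:ℝ)^2 * |(v s : ℝ) * (u s' : ℝ) - (v s' : ℝ) * (u s : ℝ)| := by
          apply mul_le_mul_of_nonneg_left hdetr (by positivity)
        nlinarith
      linarith
  -- counting
  have hcount : S.card = ∑ b ∈ S.image F, (S.filter (fun t => F t = b)).card :=
    Finset.card_eq_sum_card_image F S
  have hfiber : ∀ b ∈ S.image F, ((S.filter (fun t => F t = b)).card : ℝ) ≤ Dτ := by
    intro b hb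
    obtain ⟨s₀, hs₀, hFs₀⟩ := Finset.mem_image.1 hb
    have hsub : ∀ t ∈ S.filter (fun t => F t = b),
        u t = u s₀ ∧ v t = v s₀ ∧ w t = w s₀ := by
      intro t ht
      obtain ⟨htS, htb⟩ := Finset.mem_filter.1 ht
      exact hsame t htS s₀ hs₀ (by rw [htb, hFs₀])
    have hcard : (S.filter (fun t => F t = b)).card ≤
        ((u s₀).divisors ×ˢ ((v s₀).divisors ×ˢ (w s₀).divisors)).card := by
      apply Finset.card_le_card_of_injOn (fun t => (x₁ t, (y₁ t, z₁ t)))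
      · intro t ht
        have htS := (Finset.mem_filter.1 ht).1
        obtain ⟨huv, hvv, hwv⟩ := hsub t ht
        show (x₁ t, (y₁ t, z₁ t)) ∈ (u s₀).divisors ×ˢ ((v s₀).divisors ×ˢ (w s₀).divisors)
        simp only [Finset.mem_product, Nat.mem_divisors]
        refine ⟨⟨?_, ?_⟩, ⟨?_, ?_⟩, ⟨?_, ?_⟩⟩
        · rw [← huv]; exact ⟨x₀ t * x₁ t, by rw [hu]; ring⟩
        · exact Nat.pos_iff_ne_zero.1 (hu0 s₀ hs₀)
        · rw [← hvv]; exact ⟨y₀ t * y₁ t, by rw [hv]; ring⟩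
        · exact Nat.pos_iff_ne_zero.1 (hv0 s₀ hs₀)
        · rw [← hwv]; exact ⟨z₀ t * z₁ t, by rw [hw]; ring⟩
        · exact Nat.pos_iff_ne_zero.1 (hw0 s₀ hs₀)
      · intro t ht t' ht' heq3
        have htS := (Finset.mem_filter.1 ht).1
        have htS' := (Finset.mem_filter.1 ht').1
        obtain ⟨h1, h2, h3⟩ := hsub t ht
        obtain ⟨h1', h2', h3'⟩ := hsub t' ht'
        simp only [Prod.mk.injEq] at heq3
        obtain ⟨e1, e2, e3⟩ := heq3
        have hx1pos : 0 < x₁ t := lt_of_lt_of_le hposx₁ (hx₁ t htS).1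
        have hy1pos : 0 < y₁ t := lt_of_lt_of_le hposy₁ (hy₁ t htS).1
        have hz1pos : 0 < z₁ t := lt_of_lt_of_le hposz₁ (hz₁ t htS).1
        have hueq : u t = u t' := by rw [h1, h1']
        have hveq : v t = v t' := by rw [h2, h2']
        have hweq : w t = w t' := by rw [h3, h3']
        have ex0 : x₀ t = x₀ t' := by
          have : x₀ t * x₁ t ^ 2 = x₀ t' * x₁ t' ^ 2 := hueq
          rw [← e1] at this
          exact Nat.eq_of_mul_eq_mul_right (by positivity) this
        have ey0 : y₀ t = y₀ t' := by
          have : y₀ t * y₁ t ^ 2 = y₀ t' * y₁ t' ^ 2 := hveq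
          rw [← e2] at this
          exact Nat.eq_of_mul_eq_mul_right (by positivity) this
        have ez0 : z₀ t = z₀ t' := by
          have : z₀ t * z₁ t ^ 2 = z₀ t' * z₁ t' ^ 2 := hweq
          rw [← e3] at this
          exact Nat.eq_of_mul_eq_mul_right (by positivity) this
        exact hinj t htS t' htS' ex0 e1 ey0 e2 ez0 e3
    calc ((S.filter (fun t => F t = b)).card : ℝ)
        ≤ (((u s₀).divisors ×ˢ ((v s₀).divisors ×ˢ (w s₀).divisors)).card : ℝ) := by
          exact_mod_cast hcard
      _ = (((u s₀).divisors.card * ((v s₀).divisors.card * (w s₀).divisors.card) : ℕ) : ℝ) := by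
          rw [Finset.card_product, Finset.card_product]
      _ ≤ Dτ := hDτ s₀ hs₀
  have himgcard : ((S.image F).card : ℝ) ≤ 512 * (U:ℝ) * (V:ℝ) / (C:ℝ) + 1 := by
    have hsub : S.image F ⊆ Finset.Icc (0:ℤ) M := by
      intro b hb
      obtain ⟨s₀, hs₀, hFs₀⟩ := Finset.mem_image.1 hb
      rw [← hFs₀]
      exact hFmem s₀ hs₀
    have h1 : (S.image F).card ≤ (Finset.Icc (0:ℤ) M).card := Finset.card_le_card hsub
    have h2 : (Finset.Icc (0:ℤ) M).card = (M + 1).toNat := by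
      rw [Int.card_Icc]
      norm_num
    have h3 : (((M + 1).toNat : ℤ) : ℝ) = (M:ℝ) + 1 := by
      rw [Int.toNat_of_nonneg (by omega)]
      push_cast
      ring
    calc ((S.image F).card : ℝ) ≤ (((M+1).toNat : ℕ) : ℝ) := by
          rw [h2] at h1
          exact_mod_cast h1
      _ = (M:ℝ) + 1 := by exact_mod_cast h3
      _ ≤ 512 * (U:ℝ) * (V:ℝ) / (C:ℝ) + 1 := by
          have := Int.floor_le ((512 * (U:ℝ) * (V:ℝ)) / (C:ℝ))
          rw [← hM] at this
          linarith
  calc (S.card : ℝ) = ∑ b ∈ S.image F, ((S.filter (fun t => F t = b)).card : ℝ) := by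
        rw [hcount]
        push_cast
        rfl
    _ ≤ ∑ _b ∈ S.image F, Dτ := Finset.sum_le_sum hfiber
    _ = ((S.image F).card : ℝ) * Dτ := by rw [Finset.sum_const, nsmul_eq_mul]
    _ ≤ (512 * (U:ℝ) * (V:ℝ) / (C:ℝ) + 1) * Dτ := by
        apply mul_le_mul_of_nonneg_right himgcard hDτ0
    _ = Dτ * (512 * ((X₀ * X₁ ^ 2 : ℕ) : ℝ) * ((Y₀ * Y₁ ^ 2 : ℕ) : ℝ) / (C : ℝ) + 1) := by
        rw [hU, hV]
        push_cast
        ring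


theorem improved_geometry_bound_quadratic (d : ℕ) (hd : 2 ≤ d) (ε : ℝ) (hε : 0 < ε) :
    ∃ C : ℝ, ∀ (lam X : ℝ) (c₁ c₂ c₃ : ℕ) (Xs Ys Zs : Fin d → ℕ),
      0 < lam → 1 ≤ X → Admissible d lam X c₁ c₂ c₃ Xs Ys Zs →
      (B d c₁ c₂ c₃ Xs Ys Zs : ℝ) ≤
        C * (X ^ (lam + ε) /
            (((Xs ⟨0, by omega⟩ * Ys ⟨0, by omega⟩ * Zs ⟨0, by omega⟩) *
              (Xs ⟨1, by omega⟩ * Ys ⟨1, by omega⟩ * Zs ⟨1, by omega⟩) : ℕ) : ℝ)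
          + X ^ (lam - 1 + ε) *
            ((Xs ⟨1, by omega⟩ * Ys ⟨1, by omega⟩ * Zs ⟨1, by omega⟩ : ℕ) : ℝ)) := by
  classical
  have hε0 : 0 < min ε 1 := lt_min hε one_pos
  set ε' : ℝ := min ε 1 / 3 with hε'def
  have hε'pos : 0 < ε' := by rw [hε'def]; linarith
  have hε'le : ε' ≤ 1 := by
    rw [hε'def]
    have := min_le_right ε 1
    linarith
  have h3ε : ε' * 3 = min ε 1 := by rw [hε'def]; ring
  obtain ⟨Cτ, hCτ1, hCτ⟩ := tau_bound ε' hε'pos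
  set E : ℕ := (∑ i : Fin d, (i.val + 1)) + 1 with hEdef
  set K₁ : ℝ := (Cτ * 2 ^ E) ^ 3 with hK₁def
  have hK₁pos : 0 < K₁ := by
    have : (0:ℝ) < Cτ := by linarith
    positivity
  refine ⟨8192 * K₁, ?_⟩
  intro lam X c₁ c₂ c₃ Xs Ys Zs hlam hX hadm
  obtain ⟨hc₁, hc₂, hc₃, hXs, hYs, hZs, hNl, hNu, hXl, hXu⟩ := hadm
  have hX0 : (0:ℝ) < X := lt_of_lt_of_le one_pos hX
  have hd0 : (0:ℕ) < d := by omega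
  have hd1 : (1:ℕ) < d := by omega
  set i0 : Fin d := ⟨0, hd0⟩ with hi0def
  set i1 : Fin d := ⟨1, hd1⟩ with hi1def
  -- the solution finset
  set S : Finset ((Fin d → ℕ) × (Fin d → ℕ) × (Fin d → ℕ)) :=
    ((Fintype.piFinset (fun i => Finset.Ico (Xs i) (2 * Xs i))) ×ˢ
      (Fintype.piFinset (fun i => Finset.Ico (Ys i) (2 * Ys i))) ×ˢ
      (Fintype.piFinset (fun i => Finset.Ico (Zs i) (2 * Zs i)))).filter (fun t =>
    (c₁ * ∏ i, t.1 i ^ (i.val + 1) + c₂ * ∏ i, t.2.1 i ^ (i.val + 1)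
      = c₃ * ∏ i, t.2.2 i ^ (i.val + 1)) ∧
    Nat.gcd (c₁ * ∏ i, t.1 i) (Nat.gcd (c₂ * ∏ i, t.2.1 i) (c₃ * ∏ i, t.2.2 i)) = 1) with hS
  have hBS : B d c₁ c₂ c₃ Xs Ys Zs = S.card := by
    rw [B]
    have hiff : ∀ t : (Fin d → ℕ) × (Fin d → ℕ) × (Fin d → ℕ),
        ((∀ i, dyadic (t.1 i) (Xs i)) ∧ (∀ i, dyadic (t.2.1 i) (Ys i)) ∧
        (∀ i, dyadic (t.2.2 i) (Zs i)) ∧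
        (c₁ * ∏ i, t.1 i ^ (i.val + 1) + c₂ * ∏ i, t.2.1 i ^ (i.val + 1)
          = c₃ * ∏ i, t.2.2 i ^ (i.val + 1)) ∧
        Nat.gcd (c₁ * ∏ i, t.1 i) (Nat.gcd (c₂ * ∏ i, t.2.1 i) (c₃ * ∏ i, t.2.2 i)) = 1)
        ↔ t ∈ S := by
      intro t
      rw [hS, Finset.mem_filter, Finset.mem_product, Finset.mem_product]
      simp only [Fintype.mem_piFinset, Finset.mem_Ico, dyadic]
      constructor
      · rintro ⟨h1, h2, h3, h4, h5⟩
        exact ⟨⟨fun i => h1 i, fun i => h2 i, fun i => h3 i⟩, h4, h5⟩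
      · rintro ⟨⟨h1, h2, h3⟩, h4, h5⟩
        exact ⟨fun i => h1 i, fun i => h2 i, fun i => h3 i, h4, h5⟩
    rw [Nat.card_congr (Equiv.subtypeEquivRight hiff)]
    exact Nat.card_eq_finsetCard S
  -- membership unpacking
  have hmem : ∀ t ∈ S, ((∀ i, Xs i ≤ t.1 i ∧ t.1 i < 2 * Xs i) ∧
      (∀ i, Ys i ≤ t.2.1 i ∧ t.2.1 i < 2 * Ys i) ∧
      (∀ i, Zs i ≤ t.2.2 i ∧ t.2.2 i < 2 * Zs i)) ∧
      (c₁ * ∏ i, t.1 i ^ (i.val + 1) + c₂ * ∏ i, t.2.1 i ^ (i.val + 1)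
        = c₃ * ∏ i, t.2.2 i ^ (i.val + 1)) ∧
      Nat.gcd (c₁ * ∏ i, t.1 i) (Nat.gcd (c₂ * ∏ i, t.2.1 i) (c₃ * ∏ i, t.2.2 i)) = 1 := by
    intro t ht
    rw [hS, Finset.mem_filter, Finset.mem_product, Finset.mem_product] at ht
    simp only [Fintype.mem_piFinset, Finset.mem_Ico] at ht
    exact ⟨⟨ht.1.1, ht.1.2.1, ht.1.2.2⟩, ht.2.1, ht.2.2⟩
  -- the tail map
  set tm : (Fin d → ℕ) → (Fin d → ℕ) := fun f i => if i.val < 2 then 0 else f i with htmdef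
  set T : ((Fin d → ℕ) × (Fin d → ℕ) × (Fin d → ℕ)) →
      ((Fin d → ℕ) × (Fin d → ℕ) × (Fin d → ℕ)) :=
    fun t => (tm t.1, tm t.2.1, tm t.2.2) with hTdef
  have htails : ∀ b : ((Fin d → ℕ) × (Fin d → ℕ) × (Fin d → ℕ)),
      ∀ t ∈ S.filter (fun t => T t = b), ∀ s ∈ S.filter (fun t => T t = b),
      ∀ i : Fin d, ¬ i.val < 2 →
      t.1 i = s.1 i ∧ t.2.1 i = s.2.1 i ∧ t.2.2 i = s.2.2 i := by
    intro b t ht s hs i hi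
    have h1 : T t = T s := by
      rw [(Finset.mem_filter.1 ht).2, (Finset.mem_filter.1 hs).2]
    refine ⟨?_, ?_, ?_⟩
    · have h2 := congrFun (congrArg (fun p => p.1) h1) i
      simpa only [hTdef, htmdef, if_neg hi] using h2
    · have h2 := congrFun (congrArg (fun p => p.2.1) h1) i
      simpa only [hTdef, htmdef, if_neg hi] using h2
    · have h2 := congrFun (congrArg (fun p => p.2.2) h1) i
      simpa only [hTdef, htmdef, if_neg hi] using h2
  -- global quantities
  set Q : ℝ := (((Xs i0 * Ys i0 * Zs i0) * (Xs i1 * Ys i1 * Zs i1) : ℕ) : ℝ) with hQdef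
  set R : ℝ := ((Xs i1 * Ys i1 * Zs i1 : ℕ) : ℝ) with hRdef
  have hQpos : (0:ℝ) < Q := by
    rw [hQdef]
    have h : 0 < (Xs i0 * Ys i0 * Zs i0) * (Xs i1 * Ys i1 * Zs i1) :=
      Nat.mul_pos (Nat.mul_pos (Nat.mul_pos (hXs i0) (hYs i0)) (hZs i0))
        (Nat.mul_pos (Nat.mul_pos (hXs i1) (hYs i1)) (hZs i1))
    exact_mod_cast h
  have hRpos : (0:ℝ) < R := by
    rw [hRdef]
    have h : 0 < Xs i1 * Ys i1 * Zs i1 :=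
      Nat.mul_pos (Nat.mul_pos (hXs i1) (hYs i1)) (hZs i1)
    exact_mod_cast h
  set Dτ : ℝ := K₁ * X ^ (ε' * 3) with hDτdef
  have hDτ0 : 0 ≤ Dτ := by
    rw [hDτdef]
    positivity
  set F₀ : ℝ := Dτ * (4096 * Q * R / X + 1) with hF₀def
  have hF₀0 : 0 ≤ F₀ := by
    rw [hF₀def]
    have h1 : 0 ≤ 4096 * Q * R / X := by positivity
    nlinarith
  -- fiber bound
  have hfiber : ∀ b ∈ S.image T, ((S.filter (fun t => T t = b)).card : ℝ) ≤ F₀ := by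
    intro b hb
    obtain ⟨s₀, hs₀S, hTs₀⟩ := Finset.mem_image.1 hb
    have hs₀fib : s₀ ∈ S.filter (fun t => T t = b) := Finset.mem_filter.2 ⟨hs₀S, hTs₀⟩
    set A : ℕ := c₁ * ∏ i ∈ univ.filter (fun i : Fin d => ¬ i.val < 2),
      s₀.1 i ^ (i.val + 1) with hAdef
    set Bc : ℕ := c₂ * ∏ i ∈ univ.filter (fun i : Fin d => ¬ i.val < 2),
      s₀.2.1 i ^ (i.val + 1) with hBcdef
    set Cc : ℕ := c₃ * ∏ i ∈ univ.filter (fun i : Fin d => ¬ i.val < 2),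
      s₀.2.2 i ^ (i.val + 1) with hCcdef
    have hCc : 0 < Cc := by
      rw [hCcdef]
      apply Nat.mul_pos hc₃
      apply Finset.prod_pos
      intro i _
      exact pow_pos (lt_of_lt_of_le (hZs i) ((hmem s₀ hs₀S).1.2.2 i).1) _
    -- product rewrites
    have hprodx : ∀ t ∈ S.filter (fun t => T t = b),
        c₁ * ∏ i, t.1 i ^ (i.val + 1) = A * (t.1 i0 * t.1 i1 ^ 2) := by
      intro t ht
      rw [prod_split hd0 hd1 t.1, hAdef]
      rw [Finset.prod_congr rfl (fun i hi => by
        rw [(htails b t ht s₀ hs₀fib i (Finset.mem_filter.1 hi).2).1])]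
      ring
    have hprody : ∀ t ∈ S.filter (fun t => T t = b),
        c₂ * ∏ i, t.2.1 i ^ (i.val + 1) = Bc * (t.2.1 i0 * t.2.1 i1 ^ 2) := by
      intro t ht
      rw [prod_split hd0 hd1 t.2.1, hBcdef]
      rw [Finset.prod_congr rfl (fun i hi => by
        rw [(htails b t ht s₀ hs₀fib i (Finset.mem_filter.1 hi).2).2.1])]
      ring
    have hprodz : ∀ t ∈ S.filter (fun t => T t = b),
        c₃ * ∏ i, t.2.2 i ^ (i.val + 1) = Cc * (t.2.2 i0 * t.2.2 i1 ^ 2) := by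
      intro t ht
      rw [prod_split hd0 hd1 t.2.2, hCcdef]
      rw [Finset.prod_congr rfl (fun i hi => by
        rw [(htails b t ht s₀ hs₀fib i (Finset.mem_filter.1 hi).2).2.2])]
      ring
    have heqcore : ∀ t ∈ S.filter (fun t => T t = b),
        A * (t.1 i0 * t.1 i1 ^ 2) + Bc * (t.2.1 i0 * t.2.1 i1 ^ 2)
          = Cc * (t.2.2 i0 * t.2.2 i1 ^ 2) := by
      intro t ht
      rw [← hprodx t ht, ← hprody t ht, ← hprodz t ht]
      exact (hmem t (Finset.mem_filter.1 ht).1).2.1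
    have hgcdcore : ∀ t ∈ S.filter (fun t => T t = b),
        Nat.gcd (A * (t.1 i0 * t.1 i1)) (Nat.gcd (Bc * (t.2.1 i0 * t.2.1 i1))
          (Cc * (t.2.2 i0 * t.2.2 i1))) = 1 := by
      intro t ht
      have htS := (Finset.mem_filter.1 ht).1
      refine cop3 (k := d + 1) ?_ ?_ ?_ (hmem t htS).2.2
      · have hA' : A = c₁ * ∏ i ∈ univ.filter (fun i : Fin d => ¬ i.val < 2),
            t.1 i ^ (i.val + 1) := by
          rw [hAdef]
          congr 1
          exact (Finset.prod_congr rfl (fun i hi => by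
            rw [(htails b t ht s₀ hs₀fib i (Finset.mem_filter.1 hi).2).1])).symm
        rw [hA']
        exact core_form_dvd hd0 hd1 c₁ t.1
      · have hB' : Bc = c₂ * ∏ i ∈ univ.filter (fun i : Fin d => ¬ i.val < 2),
            t.2.1 i ^ (i.val + 1) := by
          rw [hBcdef]
          congr 1
          exact (Finset.prod_congr rfl (fun i hi => by
            rw [(htails b t ht s₀ hs₀fib i (Finset.mem_filter.1 hi).2).2.1])).symm
        rw [hB']
        exact core_form_dvd hd0 hd1 c₂ t.2.1
      · have hC' : Cc = c₃ * ∏ i ∈ univ.filter (fun i : Fin d => ¬ i.val < 2),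
            t.2.2 i ^ (i.val + 1) := by
          rw [hCcdef]
          congr 1
          exact (Finset.prod_congr rfl (fun i hi => by
            rw [(htails b t ht s₀ hs₀fib i (Finset.mem_filter.1 hi).2).2.2])).symm
        rw [hC']
        exact core_form_dvd hd0 hd1 c₃ t.2.2
    have hinjcore : ∀ t ∈ S.filter (fun t => T t = b), ∀ t' ∈ S.filter (fun t => T t = b),
        t.1 i0 = t'.1 i0 → t.1 i1 = t'.1 i1 → t.2.1 i0 = t'.2.1 i0 →
        t.2.1 i1 = t'.2.1 i1 → t.2.2 i0 = t'.2.2 i0 → t.2.2 i1 = t'.2.2 i1 → t = t' := by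
      intro t ht t' ht' e1 e2 e3 e4 e5 e6
      have hcases : ∀ i : Fin d, i.val < 2 → i = i0 ∨ i = i1 := by
        intro i hi
        rcases (by omega : i.val = 0 ∨ i.val = 1) with h | h
        · exact Or.inl (Fin.ext h)
        · exact Or.inr (Fin.ext h)
      have hx : t.1 = t'.1 := by
        funext i
        by_cases hi : i.val < 2
        · rcases hcases i hi with rfl | rfl
          · exact e1
          · exact e2
        · rw [(htails b t ht t' ht' i hi).1]
      have hy : t.2.1 = t'.2.1 := by
        funext i
        by_cases hi : i.val < 2
        · rcases hcases i hi with rfl | rfl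
          · exact e3
          · exact e4
        · rw [(htails b t ht t' ht' i hi).2.1]
      have hz : t.2.2 = t'.2.2 := by
        funext i
        by_cases hi : i.val < 2
        · rcases hcases i hi with rfl | rfl
          · exact e5
          · exact e6
        · rw [(htails b t ht t' ht' i hi).2.2]
      exact Prod.ext hx (Prod.ext hy hz)
    -- divisor-count bound
    have hτcore : ∀ t ∈ S.filter (fun t => T t = b),
        ((((t.1 i0 * t.1 i1 ^ 2).divisors.card *
          ((t.2.1 i0 * t.2.1 i1 ^ 2).divisors.card *
           (t.2.2 i0 * t.2.2 i1 ^ 2).divisors.card)) : ℕ) : ℝ) ≤ Dτ := by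
      intro t ht
      have htS := (Finset.mem_filter.1 ht).1
      have hm := hmem t htS
      have key : ∀ (f W : Fin d → ℕ), (∀ i, 0 < W i) →
          (∀ i, W i ≤ f i ∧ f i < 2 * W i) →
          ((∏ i, W i ^ (i.val + 1) : ℕ) : ℝ) < 2 * X →
          ((f i0 * f i1 ^ 2 : ℕ) : ℝ) ≤ 2 ^ E * X ∧ f i0 * f i1 ^ 2 ≠ 0 := by
        intro f W hW hf hWX
        constructor
        · have h1 := u_le_full hd0 hd1 f W hW hf
          have h1' : ((f i0 * f i1 ^ 2 : ℕ) : ℝ) ≤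
              2 ^ (∑ i : Fin d, (i.val + 1)) * ((∏ i, W i ^ (i.val + 1) : ℕ) : ℝ) := by
            exact_mod_cast h1
          calc ((f i0 * f i1 ^ 2 : ℕ) : ℝ)
              ≤ 2 ^ (∑ i : Fin d, (i.val + 1)) * ((∏ i, W i ^ (i.val + 1) : ℕ) : ℝ) := h1'
            _ ≤ 2 ^ (∑ i : Fin d, (i.val + 1)) * (2 * X) := by
                apply mul_le_mul_of_nonneg_left (le_of_lt hWX) (by positivity)
            _ = 2 ^ E * X := by rw [hEdef]; ring
        · have : 0 < f i0 * f i1 ^ 2 := by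
            have h0 : 0 < f i0 := lt_of_lt_of_le (hW i0) (hf i0).1
            have h1 : 0 < f i1 := lt_of_lt_of_le (hW i1) (hf i1).1
            positivity
          omega
      have hXb : ((∏ i, Xs i ^ (i.val + 1) : ℕ) : ℝ) < 2 * X := by
        refine lt_of_le_of_lt ?_ hXu
        exact_mod_cast Nat.cast_le.2 (le_max_left _ _)
      have hYb : ((∏ i, Ys i ^ (i.val + 1) : ℕ) : ℝ) < 2 * X := by
        refine lt_of_le_of_lt ?_ hXu
        exact_mod_cast Nat.cast_le.2 (le_trans (le_max_left _ _) (le_max_right _ _))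
      have hZb : ((∏ i, Zs i ^ (i.val + 1) : ℕ) : ℝ) < 2 * X := by
        refine lt_of_le_of_lt ?_ hXu
        exact_mod_cast Nat.cast_le.2 (le_trans (le_max_right _ _) (le_max_right _ _))
      obtain ⟨hux, hux0⟩ := key t.1 Xs hXs hm.1.1 hXb
      obtain ⟨huy, huy0⟩ := key t.2.1 Ys hYs hm.1.2.1 hYb
      obtain ⟨huz, huz0⟩ := key t.2.2 Zs hZs hm.1.2.2 hZb
      have hτx := tau_u hε'pos hε'le hX0 hCτ1 hCτ E _ hux0 hux
      have hτy := tau_u hε'pos hε'le hX0 hCτ1 hCτ E _ huy0 huy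
      have hτz := tau_u hε'pos hε'le hX0 hCτ1 hCτ E _ huz0 huz
      set M1 : ℝ := Cτ * (2 ^ E * X ^ ε') with hM1def
      have hM1nn : 0 ≤ M1 := by
        rw [hM1def]
        have : (0:ℝ) < Cτ := by linarith
        positivity
      have hcast : ((((t.1 i0 * t.1 i1 ^ 2).divisors.card *
          ((t.2.1 i0 * t.2.1 i1 ^ 2).divisors.card *
           (t.2.2 i0 * t.2.2 i1 ^ 2).divisors.card)) : ℕ) : ℝ)
          = ((t.1 i0 * t.1 i1 ^ 2).divisors.card : ℝ) *
            (((t.2.1 i0 * t.2.1 i1 ^ 2).divisors.card : ℝ) *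
             ((t.2.2 i0 * t.2.2 i1 ^ 2).divisors.card : ℝ)) := by push_cast; ring
      rw [hcast]
      have hstep : ((t.1 i0 * t.1 i1 ^ 2).divisors.card : ℝ) *
          (((t.2.1 i0 * t.2.1 i1 ^ 2).divisors.card : ℝ) *
           ((t.2.2 i0 * t.2.2 i1 ^ 2).divisors.card : ℝ)) ≤ M1 * (M1 * M1) := by
        have n1 : (0:ℝ) ≤ ((t.1 i0 * t.1 i1 ^ 2).divisors.card : ℝ) := Nat.cast_nonneg _
        have n2 : (0:ℝ) ≤ ((t.2.1 i0 * t.2.1 i1 ^ 2).divisors.card : ℝ) := Nat.cast_nonneg _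
        have n3 : (0:ℝ) ≤ ((t.2.2 i0 * t.2.2 i1 ^ 2).divisors.card : ℝ) := Nat.cast_nonneg _
        have h23 : ((t.2.1 i0 * t.2.1 i1 ^ 2).divisors.card : ℝ) *
            ((t.2.2 i0 * t.2.2 i1 ^ 2).divisors.card : ℝ) ≤ M1 * M1 :=
          mul_le_mul hτy hτz n3 hM1nn
        exact mul_le_mul hτx h23 (mul_nonneg n2 n3) hM1nn
      refine le_trans hstep ?_
      have hMD : M1 * (M1 * M1) = Dτ := by
        rw [hM1def, hDτdef, hK₁def]
        have hX3 : (X ^ ε') ^ (3:ℕ) = X ^ (ε' * 3) := by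
          rw [← Real.rpow_natCast (X ^ ε') 3, ← Real.rpow_mul hX0.le]
          norm_num
        rw [← hX3]
        ring
      rw [hMD]
    -- apply the core lemma
    have hcore := core (S.filter (fun t => T t = b))
      (fun t => t.1 i0) (fun t => t.1 i1) (fun t => t.2.1 i0) (fun t => t.2.1 i1)
      (fun t => t.2.2 i0) (fun t => t.2.2 i1) A Bc Cc
      (Xs i0) (Xs i1) (Ys i0) (Ys i1) (Zs i0) (Zs i1) hCc
      (hXs i0) (hXs i1) (hYs i0) (hYs i1) (hZs i0) (hZs i1)
      (fun t ht => (hmem t (Finset.mem_filter.1 ht).1).1.1 i0)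
      (fun t ht => (hmem t (Finset.mem_filter.1 ht).1).1.1 i1)
      (fun t ht => (hmem t (Finset.mem_filter.1 ht).1).1.2.1 i0)
      (fun t ht => (hmem t (Finset.mem_filter.1 ht).1).1.2.1 i1)
      (fun t ht => (hmem t (Finset.mem_filter.1 ht).1).1.2.2 i0)
      (fun t ht => (hmem t (Finset.mem_filter.1 ht).1).1.2.2 i1)
      heqcore hgcdcore hinjcore Dτ hDτ0 hτcore
    refine le_trans hcore ?_
    -- lower bound on Cc
    have hCcr : (0:ℝ) < (Cc:ℝ) := by exact_mod_cast hCc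
    have hCcX : X ≤ (Cc:ℝ) * (8 * ((Zs i0 * Zs i1 ^ 2 : ℕ) : ℝ)) := by
      have hm₀ := hmem s₀ hs₀S
      -- the three lower bounds
      have hx1 : ∏ i, Xs i ^ (i.val + 1) ≤ c₃ * ∏ i, s₀.2.2 i ^ (i.val + 1) := by
        calc ∏ i, Xs i ^ (i.val + 1) ≤ ∏ i, s₀.1 i ^ (i.val + 1) := by
              apply Finset.prod_le_prod'
              intro i _
              exact Nat.pow_le_pow_left (hm₀.1.1 i).1 _
          _ ≤ c₁ * ∏ i, s₀.1 i ^ (i.val + 1) := Nat.le_mul_of_pos_left _ hc₁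
          _ ≤ c₁ * ∏ i, s₀.1 i ^ (i.val + 1) + c₂ * ∏ i, s₀.2.1 i ^ (i.val + 1) :=
              Nat.le_add_right _ _
          _ = c₃ * ∏ i, s₀.2.2 i ^ (i.val + 1) := hm₀.2.1
      have hy1 : ∏ i, Ys i ^ (i.val + 1) ≤ c₃ * ∏ i, s₀.2.2 i ^ (i.val + 1) := by
        calc ∏ i, Ys i ^ (i.val + 1) ≤ ∏ i, s₀.2.1 i ^ (i.val + 1) := by
              apply Finset.prod_le_prod'
              intro i _
              exact Nat.pow_le_pow_left (hm₀.1.2.1 i).1 _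
          _ ≤ c₂ * ∏ i, s₀.2.1 i ^ (i.val + 1) := Nat.le_mul_of_pos_left _ hc₂
          _ ≤ c₁ * ∏ i, s₀.1 i ^ (i.val + 1) + c₂ * ∏ i, s₀.2.1 i ^ (i.val + 1) :=
              Nat.le_add_left _ _
          _ = c₃ * ∏ i, s₀.2.2 i ^ (i.val + 1) := hm₀.2.1
      have hz1 : ∏ i, Zs i ^ (i.val + 1) ≤ c₃ * ∏ i, s₀.2.2 i ^ (i.val + 1) := by
        calc ∏ i, Zs i ^ (i.val + 1) ≤ ∏ i, s₀.2.2 i ^ (i.val + 1) := by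
              apply Finset.prod_le_prod'
              intro i _
              exact Nat.pow_le_pow_left (hm₀.1.2.2 i).1 _
          _ ≤ c₃ * ∏ i, s₀.2.2 i ^ (i.val + 1) := Nat.le_mul_of_pos_left _ hc₃
      have hmax : max (∏ i, Xs i ^ (i.val + 1))
          (max (∏ i, Ys i ^ (i.val + 1)) (∏ i, Zs i ^ (i.val + 1)))
          ≤ c₃ * ∏ i, s₀.2.2 i ^ (i.val + 1) := max_le hx1 (max_le hy1 hz1)
      have hsplitz : c₃ * ∏ i, s₀.2.2 i ^ (i.val + 1)
          = Cc * (s₀.2.2 i0 * s₀.2.2 i1 ^ 2) := by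
        rw [prod_split hd0 hd1 s₀.2.2, hCcdef]
        ring
      have hwb : s₀.2.2 i0 * s₀.2.2 i1 ^ 2 ≤ 8 * (Zs i0 * Zs i1 ^ 2) := by
        have b0 : s₀.2.2 i0 ≤ 2 * Zs i0 := le_of_lt (hm₀.1.2.2 i0).2
        have b1 : s₀.2.2 i1 ≤ 2 * Zs i1 := le_of_lt (hm₀.1.2.2 i1).2
        calc s₀.2.2 i0 * s₀.2.2 i1 ^ 2 ≤ (2 * Zs i0) * (2 * Zs i1) ^ 2 :=
              Nat.mul_le_mul b0 (Nat.pow_le_pow_left b1 2)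
          _ = 8 * (Zs i0 * Zs i1 ^ 2) := by ring
      have hnat : max (∏ i, Xs i ^ (i.val + 1))
          (max (∏ i, Ys i ^ (i.val + 1)) (∏ i, Zs i ^ (i.val + 1)))
          ≤ Cc * (8 * (Zs i0 * Zs i1 ^ 2)) := by
        refine le_trans hmax ?_
        rw [hsplitz]
        exact Nat.mul_le_mul_left Cc hwb
      calc X ≤ ((max (∏ i, Xs i ^ (i.val + 1))
            (max (∏ i, Ys i ^ (i.val + 1)) (∏ i, Zs i ^ (i.val + 1))) : ℕ) : ℝ) := hXl
        _ ≤ ((Cc * (8 * (Zs i0 * Zs i1 ^ 2)) : ℕ) : ℝ) := by exact_mod_cast hnat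
        _ = (Cc:ℝ) * (8 * ((Zs i0 * Zs i1 ^ 2 : ℕ) : ℝ)) := by push_cast; ring
    -- convert core RHS to F₀
    rw [hF₀def]
    apply mul_le_mul_of_nonneg_left _ hDτ0
    have hUV : (0:ℝ) ≤ 512 * ((Xs i0 * Xs i1 ^ 2 : ℕ) : ℝ) * ((Ys i0 * Ys i1 ^ 2 : ℕ) : ℝ) := by
      positivity
    have hQR : Q * R = ((Xs i0 * Xs i1 ^ 2 : ℕ) : ℝ) * ((Ys i0 * Ys i1 ^ 2 : ℕ) : ℝ) *
        ((Zs i0 * Zs i1 ^ 2 : ℕ) : ℝ) := by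
      rw [hQdef, hRdef]
      push_cast
      ring
    have hmain2 : 512 * ((Xs i0 * Xs i1 ^ 2 : ℕ) : ℝ) * ((Ys i0 * Ys i1 ^ 2 : ℕ) : ℝ) / (Cc:ℝ)
        ≤ 4096 * Q * R / X := by
      rw [div_le_div_iff₀ hCcr hX0]
      have h1 := mul_le_mul_of_nonneg_left hCcX hUV
      calc 512 * ((Xs i0 * Xs i1 ^ 2 : ℕ) : ℝ) * ((Ys i0 * Ys i1 ^ 2 : ℕ) : ℝ) * X
          ≤ 512 * ((Xs i0 * Xs i1 ^ 2 : ℕ) : ℝ) * ((Ys i0 * Ys i1 ^ 2 : ℕ) : ℝ) *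
            ((Cc:ℝ) * (8 * ((Zs i0 * Zs i1 ^ 2 : ℕ) : ℝ))) := h1
        _ = 4096 * (Q * R) * (Cc:ℝ) := by rw [hQR]; ring
        _ = 4096 * Q * R * (Cc:ℝ) := by ring
    linarith
  -- image bound
  have himg : ((S.image T).card : ℝ) * Q ≤ 2 * X ^ lam := by
    set nX : ℕ := ∏ i, (if i.val < 2 then 1 else Xs i) with hnX
    set nY : ℕ := ∏ i, (if i.val < 2 then 1 else Ys i) with hnY
    set nZ : ℕ := ∏ i, (if i.val < 2 then 1 else Zs i) with hnZ
    have hsub : S.image T ⊆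
        (Fintype.piFinset (fun i => if i.val < 2 then ({0} : Finset ℕ)
          else Finset.Ico (Xs i) (2 * Xs i))) ×ˢ
        (Fintype.piFinset (fun i => if i.val < 2 then ({0} : Finset ℕ)
          else Finset.Ico (Ys i) (2 * Ys i))) ×ˢ
        (Fintype.piFinset (fun i => if i.val < 2 then ({0} : Finset ℕ)
          else Finset.Ico (Zs i) (2 * Zs i))) := by
      intro b hb
      obtain ⟨t, htS, rfl⟩ := Finset.mem_image.1 hb
      have hm := hmem t htS
      rw [Finset.mem_product, Finset.mem_product]
      refine ⟨?_, ?_, ?_⟩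
      · rw [Fintype.mem_piFinset]
        intro i
        by_cases hi : i.val < 2
        · simp [hTdef, htmdef, hi]
          omega
        · simp only [hTdef, htmdef, if_neg hi, Finset.mem_Ico]
          exact hm.1.1 i
      · rw [Fintype.mem_piFinset]
        intro i
        by_cases hi : i.val < 2
        · simp [hTdef, htmdef, hi]
          omega
        · simp only [hTdef, htmdef, if_neg hi, Finset.mem_Ico]
          exact hm.1.2.1 i
      · rw [Fintype.mem_piFinset]
        intro i
        by_cases hi : i.val < 2
        · simp [hTdef, htmdef, hi]
          omega
        · simp only [hTdef, htmdef, if_neg hi, Finset.mem_Ico]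
          exact hm.1.2.2 i
    have hcard2 : (S.image T).card ≤ nX * (nY * nZ) := by
      refine le_trans (Finset.card_le_card hsub) ?_
      rw [Finset.card_product, Finset.card_product]
      rw [Fintype.card_piFinset, Fintype.card_piFinset, Fintype.card_piFinset]
      apply Nat.le_of_eq
      congr 1
      · rw [hnX]
        exact Finset.prod_congr rfl (fun i _ => by
          by_cases hi : i.val < 2
          · simp [hi]
          · simp [hi, Nat.card_Ico]
            omega)
      congr 1
      · rw [hnY]
        exact Finset.prod_congr rfl (fun i _ => by
          by_cases hi : i.val < 2
          · simp [hi]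
          · simp [hi, Nat.card_Ico]
            omega)
      · rw [hnZ]
        exact Finset.prod_congr rfl (fun i _ => by
          by_cases hi : i.val < 2
          · simp [hi]
          · simp [hi, Nat.card_Ico]
            omega)
    have hnatid : (nX * (nY * nZ)) * ((Xs i0 * Ys i0 * Zs i0) * (Xs i1 * Ys i1 * Zs i1))
        = ∏ i, Xs i * Ys i * Zs i := by
      have e1 := tail_prod hd0 hd1 Xs
      have e2 := tail_prod hd0 hd1 Ys
      have e3 := tail_prod hd0 hd1 Zs
      have e4 : ∏ i, Xs i * Ys i * Zs i = (∏ i, Xs i) * ((∏ i, Ys i) * (∏ i, Zs i)) := by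
        rw [← Finset.prod_mul_distrib, ← Finset.prod_mul_distrib]
        exact Finset.prod_congr rfl (fun i _ => by ring)
      rw [e4, ← e1, ← e2, ← e3]
      ring
    calc ((S.image T).card : ℝ) * Q
        ≤ ((nX * (nY * nZ) : ℕ) : ℝ) * Q := by
          apply mul_le_mul_of_nonneg_right _ hQpos.le
          exact_mod_cast hcard2
      _ = ((∏ i, Xs i * Ys i * Zs i : ℕ) : ℝ) := by
          rw [hQdef, ← hnatid]
          push_cast
          ring
      _ ≤ 2 * X ^ lam := le_of_lt hNu
  -- total
  have htotal : (S.card : ℝ) ≤ ((S.image T).card : ℝ) * F₀ := by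
    calc (S.card : ℝ) = ∑ b ∈ S.image T, ((S.filter (fun t => T t = b)).card : ℝ) := by
          rw [Finset.card_eq_sum_card_image T S]
          push_cast
          rfl
      _ ≤ ∑ _b ∈ S.image T, F₀ := Finset.sum_le_sum hfiber
      _ = ((S.image T).card : ℝ) * F₀ := by rw [Finset.sum_const, nsmul_eq_mul]
  have himg' : ((S.image T).card : ℝ) ≤ 2 * X ^ lam / Q := by
    rw [le_div_iff₀ hQpos]
    exact himg
  have hmain : (S.card : ℝ) ≤ (2 * X ^ lam / Q) * F₀ :=
    le_trans htotal (mul_le_mul_of_nonneg_right himg' hF₀0)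
  -- final computation
  set m : ℝ := ε' * 3 with hmdef
  have hm_le : m ≤ ε := by
    have h := min_le_left ε 1
    have h2 := le_of_eq h3ε
    have h3 := le_of_eq h3ε.symm
    have h4 := le_of_eq hmdef
    have h5 := le_of_eq hmdef.symm
    linarith
  have hPm : X ^ (lam + m) = X ^ lam * X ^ m := Real.rpow_add hX0 _ _
  have hPm1 : X ^ (lam + m - 1) = X ^ (lam + m) / X := by
    rw [Real.rpow_sub hX0, Real.rpow_one]
  have hfinal : (2 * X ^ lam / Q) * F₀ ≤
      8192 * K₁ * (X ^ (lam + ε) / Q + X ^ (lam - 1 + ε) * R) := by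
    have hXlam : (0:ℝ) < X ^ lam := Real.rpow_pos_of_pos hX0 _
    calc (2 * X ^ lam / Q) * F₀
        = K₁ * (8192 * (X ^ (lam + m) / X) * R + 2 * (X ^ (lam + m) / Q)) := by
          rw [hF₀def, hDτdef, hPm]
          field_simp
          ring
      _ = K₁ * (8192 * X ^ (lam + m - 1) * R + 2 * (X ^ (lam + m) / Q)) := by rw [hPm1]
      _ ≤ K₁ * (8192 * X ^ (lam - 1 + ε) * R + 8192 * (X ^ (lam + ε) / Q)) := by
          apply mul_le_mul_of_nonneg_left _ hK₁pos.le
          have b1 : X ^ (lam + m - 1) ≤ X ^ (lam - 1 + ε) :=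
            Real.rpow_le_rpow_of_exponent_le hX (by linarith)
          have b2 : X ^ (lam + m) ≤ X ^ (lam + ε) :=
            Real.rpow_le_rpow_of_exponent_le hX (by linarith)
          have t1 : 8192 * X ^ (lam + m - 1) * R ≤ 8192 * X ^ (lam - 1 + ε) * R := by
            have := mul_le_mul_of_nonneg_right b1 hRpos.le
            nlinarith
          have t2 : 2 * (X ^ (lam + m) / Q) ≤ 8192 * (X ^ (lam + ε) / Q) := by
            have hx := (div_le_div_iff_of_pos_right hQpos).mpr b2
            have hnn : 0 ≤ X ^ (lam + ε) / Q := by positivity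
            linarith
          linarith
      _ = 8192 * K₁ * (X ^ (lam + ε) / Q + X ^ (lam - 1 + ε) * R) := by ring
  rw [hBS]
  exact le_trans hmain hfinal
end
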